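/- arXiv:2106.10049 — 3 statements merged into one kernel-verified Lean document; each statement's English description precedes it below -/
import Mathlib

section
/- Every vertex belonging to a moplex of a graph G is avoidable in G. -/
open SimpleGraph

namespace MoplexPaper

variable {V : Type*}

/-- Reachability in `G - S`: a walk from `u` to `v` all of whose vertices avoid `S`. -/
def ReachOutside (G : SimpleGraph V) (S : Set V) (u v : V) : Prop :=
  ∃ p : G.Walk u v, ∀ x ∈ p.support, x ∉ S

/-- `S` is a `u,v`-separator. -/
def IsSeparator (G : SimpleGraph V) (u v : V) (S : Set V) : Prop :=
  ¬ G.Adj u v ∧ u ∉ S ∧ v ∉ S ∧ ¬ ReachOutside G S u v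

/-- `S` is a minimal `u,v`-separator. -/
def IsMinSeparator (G : SimpleGraph V) (u v : V) (S : Set V) : Prop :=
  IsSeparator G u v S ∧ ∀ T ⊂ S, ¬ IsSeparator G u v T

/-- `S` is a minimal separator of `G`. -/
def IsMinimalSeparator (G : SimpleGraph V) (S : Set V) : Prop :=
  ∃ u v, u ≠ v ∧ IsMinSeparator G u v S

/-- The (open) neighbourhood of a set of vertices. -/
def setNbhd (G : SimpleGraph V) (X : Set V) : Set V :=
  {v | v ∉ X ∧ ∃ x ∈ X, G.Adj v x}

/-- The closed neighbourhood of a vertex. -/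
def closedNbhd (G : SimpleGraph V) (v : V) : Set V :=
  insert v (G.neighborSet v)

/-- `M` is a module of `G`. -/
def IsModule (G : SimpleGraph V) (M : Set V) : Prop :=
  ∀ v ∉ M, (∀ x ∈ M, G.Adj v x) ∨ (∀ x ∈ M, ¬ G.Adj v x)

/-- `M` is a clique module of `G`. -/
def IsCliqueModule (G : SimpleGraph V) (M : Set V) : Prop :=
  G.IsClique M ∧ IsModule G M

/-- `X` is a moplex of `G`: an inclusion-maximal clique module whose
neighbourhood is empty or a minimal separator. -/
def IsMoplex (G : SimpleGraph V) (X : Set V) : Prop :=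
  X.Nonempty ∧ IsCliqueModule G X ∧
  (∀ Y, X ⊆ Y → IsCliqueModule G Y → Y = X) ∧
  (setNbhd G X = ∅ ∨ IsMinimalSeparator G (setNbhd G X))

/-- A vertex is moplicial if it belongs to a moplex. -/
def Moplicial (G : SimpleGraph V) (v : V) : Prop := ∃ X, IsMoplex G X ∧ v ∈ X

/-- An extension of `v`: an induced `P₃` with midpoint `v`. -/
def IsExtension (G : SimpleGraph V) (v a b : V) : Prop :=
  a ≠ b ∧ G.Adj v a ∧ G.Adj v b ∧ ¬ G.Adj a b

/-- A cycle is induced if the only edges of `G` among its vertices are its own edges. -/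
def IsInducedCycle (G : SimpleGraph V) {w : V} (c : G.Walk w w) : Prop :=
  c.IsCycle ∧ ∀ x ∈ c.support, ∀ y ∈ c.support, G.Adj x y → s(x, y) ∈ c.edges

/-- `v` is avoidable: every extension of `v` is contained in an induced cycle. -/
def Avoidable (G : SimpleGraph V) (v : V) : Prop :=
  ∀ a b, IsExtension G v a b →
    ∃ (w : V) (c : G.Walk w w), IsInducedCycle G c ∧
      a ∈ c.support ∧ v ∈ c.support ∧ b ∈ c.support

/-- `A` is an asteroidal set of `G`. -/
def IsAsteroidal (G : SimpleGraph V) (A : Set V) : Prop :=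
  ∀ a ∈ A, ∀ x ∈ A, ∀ y ∈ A, x ≠ a → y ≠ a →
    ReachOutside G (closedNbhd G a) x y

/-- `G` is AT-free: it has no asteroidal triple. -/
def ATFree (G : SimpleGraph V) : Prop :=
  ¬ ∃ A : Set V, IsAsteroidal G A ∧ A.ncard = 3

/-- `G` has exactly the two moplexes `U` and `W`. -/
def HasExactlyTwoMoplexes (G : SimpleGraph V) (U W : Set V) : Prop :=
  IsMoplex G U ∧ IsMoplex G W ∧ U ≠ W ∧ ∀ X, IsMoplex G X → X = U ∨ X = W

/-- `G` is not complete. -/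
def NonComplete (G : SimpleGraph V) : Prop :=
  ∃ x y : V, x ≠ y ∧ ¬ G.Adj x y

section Aux

/-- A suffix of an induced path is induced. -/
lemma inducedW_dropUntil [DecidableEq V] {G : SimpleGraph V} {c b y : V} {q : G.Walk c b}
    (hq : q.IsPath)
    (hind : ∀ x ∈ q.support, ∀ z ∈ q.support, G.Adj x z → s(x, z) ∈ q.edges)
    (hy : y ∈ q.support) :
    ∀ x ∈ (q.dropUntil y hy).support, ∀ z ∈ (q.dropUntil y hy).support,
      G.Adj x z → s(x, z) ∈ (q.dropUntil y hy).edges := by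
  intro x hx z hz hadj
  have hspec := q.take_spec hy
  have hxq : x ∈ q.support := q.support_dropUntil_subset hy hx
  have hzq : z ∈ q.support := q.support_dropUntil_subset hy hz
  have he : s(x, z) ∈ q.edges := hind x hxq z hzq hadj
  have hedges : q.edges = (q.takeUntil y hy).edges ++ (q.dropUntil y hy).edges := by
    conv_lhs => rw [← hspec]
    rw [Walk.edges_append]
  rw [hedges] at he
  rcases List.mem_append.1 he with he | he
  · exfalso
    have hnodup : ((q.takeUntil y hy).support ++ (q.dropUntil y hy).support.tail).Nodup := by
      have h1 := hq.support_nodup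
      conv at h1 => rw [← hspec]
      rwa [Walk.support_append] at h1
    have hdisj := (List.nodup_append.1 hnodup).2.2
    have hxt : x ∈ (q.takeUntil y hy).support :=
      Walk.fst_mem_support_of_mem_edges _ he
    have hzt : z ∈ (q.takeUntil y hy).support :=
      Walk.snd_mem_support_of_mem_edges _ he
    have hxy : x = y := by
      by_contra hxy
      have : x ∈ (q.dropUntil y hy).support.tail := by
        have := hx
        rw [Walk.support_eq_cons (q.dropUntil y hy), List.mem_cons] at this
        rcases this with h | h
        · exact absurd h hxy
        · exact h
      exact hdisj x hxt x this rfl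
    have hzy : z = y := by
      by_contra hzy
      have : z ∈ (q.dropUntil y hy).support.tail := by
        have := hz
        rw [Walk.support_eq_cons (q.dropUntil y hy), List.mem_cons] at this
        rcases this with h | h
        · exact absurd h hzy
        · exact h
      exact hdisj z hzt z this rfl
    subst hxy; subst hzy
    exact hadj.ne rfl
  · exact he

/-- Extending an induced path by one extra vertex adjacent to its start. -/
lemma exists_induced_ext [DecidableEq V] (G : SimpleGraph V) :
    ∀ n : ℕ, ∀ (c b a : V) (q : G.Walk c b), q.length ≤ n → q.IsPath →
      (∀ x ∈ q.support, ∀ z ∈ q.support, G.Adj x z → s(x, z) ∈ q.edges) →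
      G.Adj a c →
      ∃ r : G.Walk a b, r.IsPath ∧
        (∀ x ∈ r.support, ∀ z ∈ r.support, G.Adj x z → s(x, z) ∈ r.edges) ∧
        (∀ x ∈ r.support, x = a ∨ x ∈ q.support) := by
  intro n
  induction n using Nat.strong_induction_on with
  | _ n IH =>
  intro c b a q hlen hq hind hac
  classical
  by_cases ha : a ∈ q.support
  · exact ⟨q.dropUntil a ha, hq.dropUntil ha, inducedW_dropUntil hq hind ha,
      fun x hx => Or.inr (q.support_dropUntil_subset ha hx)⟩
  · by_cases hex : ∃ z ∈ q.support, G.Adj a z ∧ z ≠ c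
    · obtain ⟨z, hzs, hazadj, hzc⟩ := hex
      have hlt : (q.dropUntil z hzs).length < q.length := by
        have hspec := q.take_spec hzs
        have hlen' : (q.takeUntil z hzs).length + (q.dropUntil z hzs).length = q.length := by
          conv_rhs => rw [← hspec]
          rw [Walk.length_append]
        have hne : (q.takeUntil z hzs).length ≠ 0 := fun h0 =>
          hzc (Walk.eq_of_length_eq_zero h0).symm
        omega
      obtain ⟨r, hr1, hr2, hr3⟩ := IH (q.dropUntil z hzs).length (by omega) z b a
        (q.dropUntil z hzs) le_rfl (hq.dropUntil hzs) (inducedW_dropUntil hq hind hzs) hazadj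
      exact ⟨r, hr1, hr2, fun x hx =>
        (hr3 x hx).imp id (fun hh => q.support_dropUntil_subset hzs hh)⟩
    · push_neg at hex
      refine ⟨Walk.cons hac q, ?_, ?_, ?_⟩
      · rw [Walk.cons_isPath_iff]; exact ⟨hq, ha⟩
      · intro x hx z hz hadj
        rw [Walk.support_cons, List.mem_cons] at hx hz
        rw [Walk.edges_cons, List.mem_cons]
        rcases hx with rfl | hx
        · rcases hz with rfl | hz
          · exact absurd rfl hadj.ne
          · have := hex z hz hadj; subst this; exact Or.inl rfl
        · rcases hz with rfl | hz
          · have := hex x hx hadj.symm; subst this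
            exact Or.inl Sym2.eq_swap
          · exact Or.inr (hind x hx z hz hadj)
      · intro x hx
        rw [Walk.support_cons, List.mem_cons] at hx
        exact hx

/-- Every walk contains an induced path between its endpoints. -/
lemma exists_induced_path [DecidableEq V] (G : SimpleGraph V) {a b : V} (p : G.Walk a b) :
    ∃ r : G.Walk a b, r.IsPath ∧
      (∀ x ∈ r.support, ∀ z ∈ r.support, G.Adj x z → s(x, z) ∈ r.edges) ∧
      (∀ x ∈ r.support, x ∈ p.support) := by
  induction p with
  | nil =>
    refine ⟨Walk.nil, Walk.IsPath.nil, ?_, fun x hx => hx⟩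
    intro x hx z hz hadj
    simp only [Walk.support_nil, List.mem_singleton] at hx hz
    subst hx; subst hz
    exact absurd rfl hadj.ne
  | @cons u c w h p ih =>
    obtain ⟨q, hq1, hq2, hq3⟩ := ih
    obtain ⟨r, hr1, hr2, hr3⟩ := exists_induced_ext G q.length _ _ _ q le_rfl hq1 hq2 h
    refine ⟨r, hr1, hr2, fun x hx => ?_⟩
    rw [Walk.support_cons, List.mem_cons]
    rcases hr3 x hx with rfl | hxq
    · exact Or.inl rfl
    · exact Or.inr (hq3 x hxq)

/-- From near-minimality of a separator: a walk from `u` to `s ∈ S` meeting `S`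
only at `s` and avoiding `X`. -/
lemma reach_key [DecidableEq V] {G : SimpleGraph V} {X S : Set V} {v u w s : V}
    (hv : v ∈ X) (hXS : ∀ x ∈ X, x ∉ S) (hclique : G.IsClique X)
    (hs : s ∈ S)
    (hnr : ¬ ReachOutside G S u v)
    (hnw : ¬ ReachOutside G S u w)
    (hr : ReachOutside G (S \ {s}) u w) :
    ∃ q : G.Walk u s, (∀ x ∈ q.support, x ∈ S → x = s) ∧ (∀ x ∈ q.support, x ∉ X) := by
  classical
  obtain ⟨p, hp⟩ := hr
  have hsp : s ∈ p.support := by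
    by_contra hsp
    refine hnw ⟨p, fun x hx hxS => ?_⟩
    rcases eq_or_ne x s with rfl | hxs
    · exact hsp hx
    · exact hp x hx ⟨hxS, hxs⟩
  set q := p.takeUntil s hsp with hqdef
  have hqsub : ∀ x ∈ q.support, x ∈ p.support := fun x hx =>
    p.support_takeUntil_subset hsp hx
  have hqS : ∀ x ∈ q.support, x ∈ S → x = s := by
    intro x hx hxS
    by_contra hxs
    exact hp x (hqsub x hx) ⟨hxS, hxs⟩
  refine ⟨q, hqS, ?_⟩
  intro x hxq hxX
  have hxs : x ≠ s := fun hh => hXS x hxX (hh ▸ hs)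
  have hsr : s ∉ (q.takeUntil x hxq).support := by
    intro hsr
    have hcount : q.support.count s = 1 := p.count_support_takeUntil_eq_one hsp
    have hspec := q.take_spec hxq
    have hsupp : q.support = (q.takeUntil x hxq).support ++ (q.dropUntil x hxq).support.tail := by
      conv_lhs => rw [← hspec]
      rw [Walk.support_append]
    have hs2 : s ∈ (q.dropUntil x hxq).support.tail := by
      have hse : s ∈ (q.dropUntil x hxq).support := Walk.end_mem_support _
      rw [Walk.support_eq_cons (q.dropUntil x hxq), List.mem_cons] at hse
      rcases hse with hh | hh
      · exact absurd hh.symm hxs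
      · exact hh
    have h2 : 2 ≤ q.support.count s := by
      rw [hsupp, List.count_append]
      have h1 : 0 < (q.takeUntil x hxq).support.count s := List.count_pos_iff.2 hsr
      have h2 : 0 < ((q.dropUntil x hxq).support.tail).count s := List.count_pos_iff.2 hs2
      omega
    omega
  have hrS : ∀ y ∈ (q.takeUntil x hxq).support, y ∉ S := by
    intro y hy hyS
    have : y = s := hqS y (q.support_takeUntil_subset hxq hy) hyS
    exact hsr (this ▸ hy)
  rcases eq_or_ne x v with rfl | hxv
  · exact hnr ⟨q.takeUntil x hxq, hrS⟩
  · have hadj : G.Adj x v := hclique hxX hv hxv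
    refine hnr ⟨(q.takeUntil x hxq).concat hadj, ?_⟩
    intro y hy
    rw [Walk.support_concat, List.mem_append,
      List.mem_singleton] at hy
    rcases hy with hy | rfl
    · exact hrS y hy
    · exact hXS _ hv

end Aux

/-- Every moplicial vertex of a graph is avoidable. -/
theorem moplicial_avoidable {V : Type*} [Fintype V] (G : SimpleGraph V) (v : V)
    (h : Moplicial G v) : Avoidable G v := by
  classical
  obtain ⟨X, hX, hvX⟩ := h
  obtain ⟨-, ⟨hclique, hmod⟩, -, hsep⟩ := hX
  intro a b hext
  obtain ⟨hab, hva, hvb, hnadj⟩ := hext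
  have haX : a ∉ X := by
    intro haX
    by_cases hbX : b ∈ X
    · exact hnadj (hclique haX hbX hab)
    · rcases hmod b hbX with hall | hnone
      · exact hnadj (hall a haX).symm
      · exact hnone v hvX hvb.symm
  have hbX : b ∉ X := by
    intro hbX
    rcases hmod a haX with hall | hnone
    · exact hnadj (hall b hbX)
    · exact hnone v hvX hva.symm
  set S := setNbhd G X with hSdef
  have haS : a ∈ S := ⟨haX, v, hvX, hva.symm⟩
  have hbS : b ∈ S := ⟨hbX, v, hvX, hvb.symm⟩
  have hXS : ∀ x ∈ X, x ∉ S := fun x hx hxS => hxS.1 hx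
  rcases hsep with hemp | hminsep
  · rw [hemp] at haS
    exact absurd haS (Set.notMem_empty a)
  obtain ⟨u, w, huw, hmin⟩ := hminsep
  obtain ⟨⟨hnadjuw, huS, hwS, hnreach⟩, hminimal⟩ := hmin
  have reach_symm : ∀ (T : Set V) (x y : V), ReachOutside G T x y → ReachOutside G T y x := by
    rintro T x y ⟨p, hp⟩
    exact ⟨p.reverse, fun z hz => hp z (by rwa [Walk.support_reverse, List.mem_reverse] at hz)⟩
  have reach_trans : ∀ (T : Set V) (x y z : V),
      ReachOutside G T x y → ReachOutside G T y z → ReachOutside G T x z := by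
    rintro T x y z ⟨p, hp⟩ ⟨q, hq⟩
    refine ⟨p.append q, fun r hr => ?_⟩
    rcases (Walk.mem_support_append_iff p q).1 hr with hh | hh
    · exact hp r hh
    · exact hq r hh
  have hnear : ∀ s ∈ S, ReachOutside G (S \ {s}) u w := by
    intro s hsS
    have hssub : S \ {s} ⊂ S := Set.sdiff_singleton_ssubset.2 hsS
    have hni := hminimal (S \ {s}) hssub
    rw [IsSeparator] at hni
    push_neg at hni
    exact hni hnadjuw (fun hh => huS hh.1) (fun hh => hwS hh.1)
  obtain ⟨u₀, w₀, hnru, hnuw, hnear₀⟩ : ∃ u₀ w₀ : V, ¬ ReachOutside G S u₀ v ∧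
      ¬ ReachOutside G S u₀ w₀ ∧ ∀ s ∈ S, ReachOutside G (S \ {s}) u₀ w₀ := by
    by_cases hru : ReachOutside G S u v
    · refine ⟨w, u, ?_, ?_, ?_⟩
      · intro hrw; exact hnreach (reach_trans S u v w hru (reach_symm S w v hrw))
      · intro hh; exact hnreach (reach_symm S w u hh)
      · intro s hsS; exact reach_symm _ _ _ (hnear s hsS)
    · exact ⟨u, w, hru, hnreach, hnear⟩
  obtain ⟨qa, hqa1, hqa2⟩ := reach_key hvX hXS hclique haS hnru hnuw (hnear₀ a haS)
  obtain ⟨qb, hqb1, hqb2⟩ := reach_key hvX hXS hclique hbS hnru hnuw (hnear₀ b hbS)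
  have hWk : ∀ x ∈ (qa.reverse.append qb).support, x ∉ X ∧ (x ∈ S → x = a ∨ x = b) := by
    intro x hx
    rcases (Walk.mem_support_append_iff _ _).1 hx with hx | hx
    · rw [Walk.support_reverse, List.mem_reverse] at hx
      exact ⟨hqa2 x hx, fun hh => Or.inl (hqa1 x hx hh)⟩
    · exact ⟨hqb2 x hx, fun hh => Or.inr (hqb1 x hx hh)⟩
  obtain ⟨P, hP1, hP2, hP3⟩ := exists_induced_path G (qa.reverse.append qb)
  have hPX : ∀ x ∈ P.support, x ∉ X := fun x hx => (hWk x (hP3 x hx)).1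
  have hPS : ∀ x ∈ P.support, x ∈ S → x = a ∨ x = b := fun x hx => (hWk x (hP3 x hx)).2
  have hvP : v ∉ P.support := fun hh => hPX v hh hvX
  have hQpath : (P.concat hvb.symm).IsPath := by
    rw [← Walk.isPath_reverse_iff, Walk.reverse_concat, Walk.cons_isPath_iff]
    constructor
    · rwa [Walk.isPath_reverse_iff]
    · rwa [Walk.support_reverse, List.mem_reverse]
  set c : G.Walk v v := Walk.cons hva (P.concat hvb.symm) with hcdef
  have hsup : ∀ z, z ∈ c.support ↔ z = v ∨ z ∈ P.support := by
    intro z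
    rw [hcdef, Walk.support_cons, List.mem_cons, Walk.support_concat,
      List.mem_append, List.mem_singleton]
    tauto
  have hedge_a : s(v, a) ∈ c.edges := by
    rw [hcdef, Walk.edges_cons]
    exact List.mem_cons_self
  have hedge_b : s(b, v) ∈ c.edges := by
    rw [hcdef, Walk.edges_cons, Walk.edges_concat, List.concat_eq_append]
    exact List.mem_cons_of_mem _ (List.mem_append.2 (Or.inr (List.mem_singleton.2 rfl)))
  have hedge_P : ∀ e ∈ P.edges, e ∈ c.edges := by
    intro e he
    rw [hcdef, Walk.edges_cons, Walk.edges_concat, List.concat_eq_append]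
    exact List.mem_cons_of_mem _ (List.mem_append.2 (Or.inl he))
  have hnbr : ∀ y, y ∈ P.support → G.Adj v y → y = a ∨ y = b := by
    intro y hy hadj
    exact hPS y hy ⟨hPX y hy, v, hvX, hadj.symm⟩
  refine ⟨v, c, ⟨?_, ?_⟩, ?_, ?_, ?_⟩
  · rw [hcdef, Walk.cons_isCycle_iff]
    refine ⟨hQpath, ?_⟩
    rw [Walk.edges_concat, List.concat_eq_append, List.mem_append, List.mem_singleton]
    rintro (he | he)
    · exact hvP (Walk.fst_mem_support_of_mem_edges P he)
    · rw [Sym2.eq_iff] at he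
      rcases he with ⟨hh1, hh2⟩ | ⟨hh1, hh2⟩
      · exact hva.ne hh2.symm
      · exact hab hh2
  · intro x hx y hy hadj
    rcases (hsup x).1 hx with rfl | hxP
    · rcases (hsup y).1 hy with rfl | hyP
      · exact absurd rfl hadj.ne
      · rcases hnbr y hyP hadj with rfl | rfl
        · exact hedge_a
        · exact Sym2.eq_swap ▸ hedge_b
    · rcases (hsup y).1 hy with rfl | hyP
      · rcases hnbr x hxP hadj.symm with rfl | rfl
        · exact Sym2.eq_swap ▸ hedge_a
        · exact hedge_b
      · exact hedge_P _ (hP2 x hxP y hyP hadj)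
  · exact (hsup a).2 (Or.inr P.start_mem_support)
  · exact (hsup v).2 (Or.inl rfl)
  · exact (hsup b).2 (Or.inr P.end_mem_support)

end MoplexPaper
end

section
/- If a graph G has an asteroidal set of size k, then G has an asteroidal set of size k all of whose vertices are moplicial. Consequently, the asteroidal number of G is at most the number of moplexes of G. -/
open SimpleGraph

namespace MoplexPaper

variable {V : Type*}

/-! ### Walks inside a region -/

def Conn (G : SimpleGraph V) (D : Set V) (u v : V) : Prop :=
  ∃ p : G.Walk u v, ∀ x ∈ p.support, x ∈ D

lemma reachOutside_iff_conn {G : SimpleGraph V} {S : Set V} {u v : V} :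
    ReachOutside G S u v ↔ Conn G Sᶜ u v := by
  constructor <;> rintro ⟨p, hp⟩ <;> exact ⟨p, hp⟩

namespace Conn

variable {G H : SimpleGraph V} {D D' : Set V} {u v w : V}

lemma refl (hu : u ∈ D) : Conn G D u u := ⟨.nil, by simpa using hu⟩

lemma mem_left (h : Conn G D u v) : u ∈ D :=
  h.choose_spec u (Walk.start_mem_support _)

lemma mem_right (h : Conn G D u v) : v ∈ D :=
  h.choose_spec v (Walk.end_mem_support _)

lemma symm (h : Conn G D u v) : Conn G D v u := by
  obtain ⟨p, hp⟩ := h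
  exact ⟨p.reverse, fun x hx => hp x (by simpa using hx)⟩

lemma trans (h1 : Conn G D u v) (h2 : Conn G D v w) : Conn G D u w := by
  obtain ⟨p, hp⟩ := h1
  obtain ⟨q, hq⟩ := h2
  refine ⟨p.append q, fun x hx => ?_⟩
  rcases (Walk.mem_support_append_iff _ _).1 hx with h | h
  · exact hp x h
  · exact hq x h

lemma of_adj (hu : u ∈ D) (hv : v ∈ D) (h : G.Adj u v) : Conn G D u v :=
  ⟨.cons h .nil, by intro x hx; simp [Walk.support_cons] at hx; rcases hx with rfl | rfl <;> assumption⟩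

lemma mono (hD : D ⊆ D') (h : Conn G D u v) : Conn G D' u v := by
  obtain ⟨p, hp⟩ := h
  exact ⟨p, fun x hx => hD (hp x hx)⟩

end Conn

lemma conn_induct {G H : SimpleGraph V} {D : Set V}
    (hstep : ∀ a b, a ∈ D → b ∈ D → G.Adj a b → Conn H D a b) :
    ∀ {u v : V}, Conn G D u v → Conn H D u v := by
  rintro u v ⟨p, hp⟩
  induction p with
  | nil => exact Conn.refl (hp _ (by simp))
  | cons hab q ih =>
      rename_i a b c
      have h1 : Conn H D a b :=
        hstep _ _ (hp a (by simp)) (hp b (by simp [Walk.support_cons])) hab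
      exact h1.trans (ih (fun x hx => hp x (by simp [Walk.support_cons, hx])))

lemma conn_mono_graph {G H : SimpleGraph V} {D : Set V} (hGH : G ≤ H)
    {u v : V} (h : Conn G D u v) : Conn H D u v :=
  conn_induct (fun a b ha hb hab => Conn.of_adj ha hb (hGH hab)) h

/-- Walk-closure principle. -/
lemma walk_closed {G : SimpleGraph V} {P D : Set V} :
    ∀ {u v : V} (p : G.Walk u v), (∀ x ∈ p.support, x ∈ D) → u ∈ P →
      (∀ a b, a ∈ P → a ∈ D → b ∈ D → G.Adj a b → b ∈ P) → v ∈ P := by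
  intro u v p
  induction p with
  | nil => exact fun _ hu _ => hu
  | cons hab q ih =>
      rename_i a b c
      intro hsup hu hstep
      exact ih (fun x hx => hsup x (by simp [Walk.support_cons, hx]))
        (hstep _ _ hu (hsup a (by simp)) (hsup b (by simp [Walk.support_cons])) hab) hstep

lemma conn_closed {G : SimpleGraph V} {P D : Set V} {u v : V}
    (h : Conn G D u v) (hu : u ∈ P)
    (hstep : ∀ a b, a ∈ P → a ∈ D → b ∈ D → G.Adj a b → b ∈ P) : v ∈ P := by
  obtain ⟨p, hp⟩ := h
  exact walk_closed p hp hu hstep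

/-! ### Components as Conn-closures -/

def Comp (G : SimpleGraph V) (D : Set V) (u₀ : V) : Set V := {v | Conn G D u₀ v}

lemma comp_subset {G : SimpleGraph V} {D : Set V} {u₀ : V} : Comp G D u₀ ⊆ D :=
  fun _ h => h.mem_right

lemma self_mem_comp {G : SimpleGraph V} {D : Set V} {u₀ : V} (h : u₀ ∈ D) :
    u₀ ∈ Comp G D u₀ := Conn.refl h

lemma comp_step {G : SimpleGraph V} {D : Set V} {u₀ v w : V}
    (hv : v ∈ Comp G D u₀) (hw : w ∈ D) (h : G.Adj v w) : w ∈ Comp G D u₀ :=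
  hv.trans (Conn.of_adj hv.mem_right hw h)

lemma conn_in_comp {G : SimpleGraph V} {D : Set V} {u₀ v : V}
    (h : v ∈ Comp G D u₀) : Conn G (Comp G D u₀) u₀ v := by
  classical
  obtain ⟨p, hp⟩ := h
  refine ⟨p, fun x hx => ?_⟩
  exact ⟨p.takeUntil x hx, fun y hy => hp y (Walk.support_takeUntil_subset _ _ hy)⟩

lemma comp_pairwise_conn {G : SimpleGraph V} {D : Set V} {u₀ v w : V}
    (hv : v ∈ Comp G D u₀) (hw : w ∈ Comp G D u₀) :
    Conn G (Comp G D u₀) v w :=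
  (conn_in_comp hv).symm.trans (conn_in_comp hw)


/-! ### Saturation -/

def satur (G : SimpleGraph V) (S : Set V) : SimpleGraph V where
  Adj a b := G.Adj a b ∨ (a ∈ S ∧ b ∈ S ∧ a ≠ b)
  symm := by
    constructor
    intro a b h
    rcases h with h | ⟨ha, hb, hne⟩
    · exact Or.inl h.symm
    · exact Or.inr ⟨hb, ha, hne.symm⟩
  loopless := by
    constructor
    intro a h
    rcases h with h | ⟨_, _, hne⟩
    · exact G.loopless.irrefl a h
    · exact hne rfl

lemma satur_adj {G : SimpleGraph V} {S : Set V} {a b : V} :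
    (satur G S).Adj a b ↔ G.Adj a b ∨ (a ∈ S ∧ b ∈ S ∧ a ≠ b) := Iff.rfl

lemma le_satur {G : SimpleGraph V} {S : Set V} : G ≤ satur G S :=
  fun _ _ h => Or.inl h

lemma satur_adj_left {G : SimpleGraph V} {S : Set V} {a b : V} (ha : a ∉ S) :
    (satur G S).Adj a b ↔ G.Adj a b := by
  rw [satur_adj]
  exact ⟨fun h => h.resolve_right (fun h' => ha h'.1), Or.inl⟩

lemma satur_adj_right {G : SimpleGraph V} {S : Set V} {a b : V} (hb : b ∉ S) :
    (satur G S).Adj a b ↔ G.Adj a b := by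
  rw [satur_adj]
  exact ⟨fun h => h.resolve_right (fun h' => hb h'.2.1), Or.inl⟩

/-! ### basic membership lemmas -/

lemma mem_setNbhd {G : SimpleGraph V} {X : Set V} {v : V} :
    v ∈ setNbhd G X ↔ v ∉ X ∧ ∃ x ∈ X, G.Adj v x := Iff.rfl

lemma setNbhd_disj {G : SimpleGraph V} {X : Set V} {v : V} (h : v ∈ setNbhd G X) : v ∉ X := h.1

lemma mem_closedNbhd {G : SimpleGraph V} {a v : V} :
    v ∈ closedNbhd G a ↔ v = a ∨ G.Adj a v := by
  simp [closedNbhd]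

lemma closure_proto {G : SimpleGraph V} {C : Set V} {a b : V}
    (ha : a ∈ C) (hb : b ∉ C) (hab : G.Adj a b) : b ∈ setNbhd G C :=
  ⟨hb, a, ha, hab.symm⟩

lemma compl_not_mem {S : Set V} {x : V} (h : x ∈ Sᶜ) : x ∉ S := h

/-- The key "other side" hypothesis for the moplex-existence engine. -/
def OtherSide (G : SimpleGraph V) (C : Set V) : Prop :=
  setNbhd G C = ∅ ∨ ∃ Z : Set V, Z.Nonempty ∧ (∀ z ∈ Z, z ∉ C ∧ z ∉ setNbhd G C) ∧
    (∀ z ∈ Z, ∀ z' ∈ Z, Conn G Z z z') ∧ (∀ s ∈ setNbhd G C, ∃ z ∈ Z, G.Adj s z)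

/-- Reaching the boundary: a walk ending at `t ∈ S` all of whose other vertices avoid `S`,
starting in the component of `u₀`, yields a neighbour of `t` in that component. -/
lemma reach_boundary {G : SimpleGraph V} {S : Set V} {u₀ : V} :
    ∀ {a t : V} (p : G.Walk a t), t ∈ S → a ∈ Comp G Sᶜ u₀ →
      (∀ x ∈ p.support, x ≠ t → x ∉ S) → ∃ b ∈ Comp G Sᶜ u₀, G.Adj b t := by
  intro a t p
  induction p with
  | nil => exact fun ht ha _ => absurd ht (comp_subset ha)
  | cons hab q ih =>
      rename_i a' b' c'
      intro ht ha hsup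
      by_cases hb : b' = c'
      · subst hb; exact ⟨a', ha, hab⟩
      · have hbS : b' ∉ S := hsup b' (by simp [Walk.support_cons]) hb
        exact ih ht (comp_step ha hbS hab)
          (fun x hx hxt => hsup x (by simp [Walk.support_cons, hx]) hxt)


/-! ### Base case: a fully-adjacent clique component is a moplex -/

lemma caseA_moplex (G : SimpleGraph V) (C : Set V) (hCne : C.Nonempty)
    (hOS : OtherSide G C)
    (hclq : ∀ c ∈ C, ∀ c' ∈ C, c ≠ c' → G.Adj c c')
    (hfull : ∀ s ∈ setNbhd G C, ∀ c ∈ C, G.Adj s c) :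
    IsMoplex G C := by
  obtain ⟨c₀, hc₀⟩ := hCne
  have hCS : ∀ c ∈ C, c ∉ setNbhd G C := fun c hc hcS => hcS.1 hc
  refine ⟨⟨c₀, hc₀⟩, ⟨?_, ?_⟩, ?_, ?_⟩
  · -- clique
    intro x hx y hy hne
    exact hclq x hx y hy hne
  · -- module
    intro v hv
    by_cases hvS : v ∈ setNbhd G C
    · exact Or.inl (fun x hx => hfull v hvS x hx)
    · exact Or.inr (fun x hx hadj => hvS (closure_proto hx hv hadj.symm))
  · -- maximality
    intro Y hCY hYcm
    refine Set.Subset.antisymm (fun y hy => ?_) hCY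
    by_contra hyC
    have hyadj : G.Adj y c₀ := hYcm.1 hy (hCY hc₀) (fun h => hyC (h ▸ hc₀))
    have hyS : y ∈ setNbhd G C := ⟨hyC, c₀, hc₀, hyadj⟩
    rcases hOS with hS0 | ⟨Z, hZne, hZout, hZconn, hZadj⟩
    · rw [hS0] at hyS; exact hyS
    · obtain ⟨z, hz, hzadj⟩ := hZadj y hyS
      have hzC := (hZout z hz).1
      have hzY : z ∉ Y := by
        intro hzY
        have : G.Adj z c₀ := hYcm.1 hzY (hCY hc₀) (fun h => hzC (h ▸ hc₀))
        exact (hZout z hz).2 (closure_proto hc₀ hzC this.symm)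
      rcases hYcm.2 z hzY with hall | hnone
      · exact (hZout z hz).2 (closure_proto hc₀ hzC (hall c₀ (hCY hc₀)).symm)
      · exact hnone y hy hzadj.symm
  · -- neighbourhood
    by_cases hS0 : setNbhd G C = ∅
    · exact Or.inl hS0
    rcases hOS with hS0' | ⟨Z, hZne, hZout, hZconn, hZadj⟩
    · exact absurd hS0' hS0
    obtain ⟨z₀, hz₀⟩ := hZne
    refine Or.inr ⟨c₀, z₀, fun h => (hZout z₀ hz₀).1 (h ▸ hc₀), ⟨?_, ?_, ?_, ?_⟩, ?_⟩
    · intro h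
      exact (hZout z₀ hz₀).2 (closure_proto hc₀ (hZout z₀ hz₀).1 h)
    · exact fun h => h.1 hc₀
    · exact (hZout z₀ hz₀).2
    · intro hro
      rw [reachOutside_iff_conn] at hro
      have : z₀ ∈ C := by
        refine conn_closed hro hc₀ ?_
        intro a b ha _ hbD hab
        by_contra hbC
        exact hbD (closure_proto ha hbC hab)
      exact (hZout z₀ hz₀).1 this
    · intro T hT hsep
      obtain ⟨t, htS, htT⟩ := Set.exists_of_ssubset hT
      obtain ⟨z_t, hz_t, hadj_t⟩ := hZadj t htS
      have hTS : T ⊆ setNbhd G C := hT.1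
      apply hsep.2.2.2
      rw [reachOutside_iff_conn]
      have h1 : Conn G Tᶜ c₀ t :=
        Conn.of_adj (fun h => (hCS c₀ hc₀) (hTS h)) htT (hfull t htS c₀ hc₀).symm
      have h2 : Conn G Tᶜ t z_t :=
        Conn.of_adj htT (fun h => (hZout z_t hz_t).2 (hTS h)) hadj_t
      have h3 : Conn G Tᶜ z_t z₀ :=
        (hZconn z_t hz_t z₀ hz₀).mono (fun z hz h => (hZout z hz).2 (hTS h))
      exact (h1.trans h2).trans h3


/-! ### Transfer: a moplex of the saturated graph inside `C` is a moplex of `G` -/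

lemma transfer (G : SimpleGraph V) (C X : Set V) (hXC : X ⊆ C)
    (hOS : OtherSide G C)
    (hX : IsMoplex (satur G (setNbhd G C)) X) : IsMoplex G X := by
  classical
  set S := setNbhd G C with hSdef
  set H := satur G S with hHdef
  obtain ⟨hXne, ⟨hXclH, hXmodH⟩, hXmaxH, hXnbH⟩ := hX
  have hSC : ∀ s ∈ S, s ∉ C := fun s hs => hs.1
  have hXS : ∀ x ∈ X, x ∉ S := fun x hx hxS => hSC x hxS (hXC hx)
  have hadjX : ∀ v x, x ∈ X → (H.Adj v x ↔ G.Adj v x) := fun v x hx => satur_adj_right (hXS x hx)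
  have hclosedC : ∀ a ∈ C, ∀ b, G.Adj a b → b ∈ C ∨ b ∈ S := by
    intro a ha b hab
    by_cases hb : b ∈ C
    · exact Or.inl hb
    · exact Or.inr (closure_proto ha hb hab)
  have hXclG : G.IsClique X := fun x hx y hy hne => (hadjX x y hy).1 (hXclH hx hy hne)
  have hXmodG : IsModule G X := by
    intro v hv
    rcases hXmodH v hv with hall | hnone
    · exact Or.inl (fun x hx => (hadjX v x hx).1 (hall x hx))
    · exact Or.inr (fun x hx h => hnone x hx ((hadjX v x hx).2 h))
  obtain ⟨x₀, hx₀⟩ := hXne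
  have hmax : ∀ Y, X ⊆ Y → IsCliqueModule G Y → Y = X := by
    intro Y hXY hYcm
    obtain ⟨hYclG, hYmodG⟩ := hYcm
    have hx₀C : x₀ ∈ C := hXC hx₀
    have hYS : ∀ y ∈ Y, y ∉ S := by
      intro y hy hyS
      rcases hOS with hS0 | ⟨Z, hZne, hZout, hZconn, hZadj⟩
      · rw [hSdef, hS0] at hyS; exact hyS
      obtain ⟨z, hz, hzadj⟩ := hZadj y hyS
      have hzC := (hZout z hz).1
      have hzY : z ∉ Y := fun hzY =>
        (hZout z hz).2 (closure_proto hx₀C hzC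
          (hYclG hzY (hXY hx₀) (fun h => hzC (h ▸ hx₀C))).symm)
      rcases hYmodG z hzY with hall | hnone
      · exact (hZout z hz).2 (closure_proto hx₀C hzC (hall x₀ (hXY hx₀)).symm)
      · exact hnone y hy hzadj.symm
    apply hXmaxH Y hXY
    refine ⟨fun a ha b hb hne => le_satur (hYclG ha hb hne), ?_⟩
    intro v hv
    rcases hYmodG v hv with hall | hnone
    · exact Or.inl (fun y hy => le_satur (hall y hy))
    · exact Or.inr (fun y hy h => hnone y hy ((satur_adj_right (hYS y hy)).1 h))
  have hnbeq : setNbhd H X = setNbhd G X := by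
    ext v
    constructor
    · rintro ⟨hvX, x, hx, hadj⟩; exact ⟨hvX, x, hx, (hadjX v x hx).1 hadj⟩
    · rintro ⟨hvX, x, hx, hadj⟩; exact ⟨hvX, x, hx, le_satur hadj⟩
  by_cases hSX0 : setNbhd G X = ∅
  · exact ⟨⟨x₀, hx₀⟩, ⟨hXclG, hXmodG⟩, hmax, Or.inl hSX0⟩
  have hHms : IsMinimalSeparator H (setNbhd G X) := by
    rcases hXnbH with h | h
    · rw [hnbeq] at h; exact absurd h hSX0
    · rw [hnbeq] at h; exact h
  refine ⟨⟨x₀, hx₀⟩, ⟨hXclG, hXmodG⟩, hmax, Or.inr ?_⟩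
  set SX := setNbhd G X with hSXdef
  have hx₀SX : x₀ ∉ SX := fun h => h.1 hx₀
  have hXSX : ∀ x ∈ X, x ∉ SX := fun x hx h => h.1 hx
  have hSXsub : ∀ t ∈ SX, t ∈ C ∨ t ∈ S := by
    rintro t ⟨htX, x, hx, hadj⟩
    exact hclosedC x (hXC hx) t hadj.symm
  have hXDH : ∀ x ∈ X, x ∈ Comp H SXᶜ x₀ := by
    intro x hx
    by_cases h : x = x₀
    · rw [h]; exact self_mem_comp hx₀SX
    · exact Conn.of_adj hx₀SX (hXSX x hx) (le_satur (hXclG hx₀ hx (fun he => h he.symm)))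
  obtain ⟨u, v, huv, hms⟩ := hHms
  obtain ⟨hnadj, huSX, hvSX, hnRO⟩ := hms.1
  have hdisjUW : ∀ p, p ∈ Comp H SXᶜ u → p ∈ Comp H SXᶜ v → False := by
    intro p hpu hpv
    exact hnRO (reachOutside_iff_conn.2 (hpu.trans hpv.symm))
  have hfull2 : ∀ t ∈ SX, (∃ b ∈ Comp H SXᶜ u, H.Adj b t) ∧ (∃ b ∈ Comp H SXᶜ v, H.Adj b t) := by
    intro t ht
    have hTss : SX \ {t} ⊂ SX := Set.sdiff_singleton_ssubset.2 ht
    have hnsep := hms.2 _ hTss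
    have hRO : ReachOutside H (SX \ {t}) u v := by
      by_contra hcon
      exact hnsep ⟨hnadj, fun h => huSX h.1, fun h => hvSX h.1, hcon⟩
    obtain ⟨p, hp⟩ := hRO
    have htp : t ∈ p.support := by
      by_contra htp
      have hall : ∀ x ∈ p.support, x ∈ SXᶜ := by
        intro x hx hxSX
        exact hp x hx ⟨hxSX, fun he => htp (he ▸ hx)⟩
      exact hdisjUW v ⟨p, hall⟩ (self_mem_comp hvSX)
    constructor
    · refine reach_boundary (p.takeUntil t htp) ht (self_mem_comp huSX) ?_
      intro x hx hxt hxSX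
      exact hp x (Walk.support_takeUntil_subset _ _ hx) ⟨hxSX, hxt⟩
    · refine reach_boundary ((p.dropUntil t htp).reverse) ht (self_mem_comp hvSX) ?_
      intro x hx hxt hxSX
      have hx' : x ∈ (p.dropUntil t htp).support := by simpa using hx
      exact hp x (Walk.support_dropUntil_subset _ _ hx') ⟨hxSX, hxt⟩
  have goodcase : ∀ q₀ : V, q₀ ∉ SX →
      (∀ p ∈ Comp H SXᶜ q₀, p ∉ S) →
      x₀ ∉ Comp H SXᶜ q₀ →
      (∀ t ∈ SX, ∃ b ∈ Comp H SXᶜ q₀, H.Adj b t) →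
      IsMinimalSeparator G SX := by
    intro q₀ hq₀ hQS hQD hQfull
    have hQDH : ∀ p, p ∈ Comp H SXᶜ q₀ → p ∈ Comp H SXᶜ x₀ → False := by
      intro p h1 h2
      exact hQD (h1.trans h2.symm)
    refine ⟨x₀, q₀, ?_, ⟨⟨?_, hx₀SX, hq₀, ?_⟩, ?_⟩⟩
    · intro h; exact hQD (by rw [h]; exact self_mem_comp hq₀)
    · intro hadj
      have hq₀X : q₀ ∉ X := fun h => hQD (hXDH q₀ h).symm
      exact hq₀ ⟨hq₀X, x₀, hx₀, hadj.symm⟩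
    · intro hro
      rw [reachOutside_iff_conn] at hro
      exact hQDH q₀ (self_mem_comp hq₀) (conn_mono_graph le_satur hro)
    · intro T hT hsep
      obtain ⟨t, htSX, htT⟩ := Set.exists_of_ssubset hT
      have hTSX : T ⊆ SX := hT.subset
      obtain ⟨htX, x_t, hx_t, hadj_t⟩ := id htSX
      obtain ⟨b_t, hb_t, hadjb⟩ := hQfull t htSX
      have hbS : b_t ∉ S := hQS b_t hb_t
      have hadjbG : G.Adj b_t t := (satur_adj_left hbS).1 hadjb
      apply hsep.2.2.2
      rw [reachOutside_iff_conn]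
      have hXT : ∀ x ∈ X, x ∈ Tᶜ := fun x hx h => hXSX x hx (hTSX h)
      have h1 : Conn G Tᶜ x₀ x_t := by
        by_cases he : x₀ = x_t
        · rw [he]; exact Conn.refl (hXT _ hx_t)
        · exact Conn.of_adj (hXT _ hx₀) (hXT _ hx_t) (hXclG hx₀ hx_t he)
      have h2 : Conn G Tᶜ x_t t := Conn.of_adj (hXT _ hx_t) htT hadj_t.symm
      have h3 : Conn G Tᶜ t b_t :=
        Conn.of_adj htT (fun h => compl_not_mem (comp_subset hb_t) (hTSX h)) hadjbG.symm
      have h4 : Conn G (Comp H SXᶜ q₀) b_t q₀ := by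
        refine conn_induct ?_ (comp_pairwise_conn hb_t (self_mem_comp hq₀))
        intro a b ha hb hab
        exact Conn.of_adj ha hb ((satur_adj_left (hQS a ha)).1 hab)
      have h4' : Conn G Tᶜ b_t q₀ := h4.mono (fun p hp h => compl_not_mem (comp_subset hp) (hTSX h))
      exact ((h1.trans h2).trans h3).trans h4'
  have badcase : ∀ q₀ : V, q₀ ∉ SX →
      (∃ s ∈ S, s ∈ Comp H SXᶜ q₀) →
      x₀ ∉ Comp H SXᶜ q₀ →
      (∀ t ∈ SX, ∃ b ∈ Comp H SXᶜ q₀, H.Adj b t) →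
      IsMinimalSeparator G SX := by
    intro q₀ hq₀ hmeet hQD hQfull
    obtain ⟨sstar, hsS, hsQ⟩ := hmeet
    rcases hOS with hS0 | ⟨Z, hZne, hZout, hZconn, hZadj⟩
    · rw [hSdef, hS0] at hsS; exact absurd hsS (Set.notMem_empty _)
    have hZSX : ∀ z ∈ Z, z ∉ SX := fun z hz h =>
      (hSXsub _ h).elim (hZout z hz).1 (hZout z hz).2
    obtain ⟨zstar, hzZ, hzadj⟩ := hZadj sstar hsS
    have hzQ : zstar ∈ Comp H SXᶜ q₀ := comp_step hsQ (hZSX _ hzZ) (le_satur hzadj)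
    have hZQ : ∀ z ∈ Z, z ∈ Comp H SXᶜ q₀ := by
      intro z hz
      exact hzQ.trans (conn_mono_graph le_satur
        ((hZconn zstar hzZ z hz).mono (fun y hy => hZSX y hy)))
    refine ⟨x₀, zstar, ?_, ⟨⟨?_, hx₀SX, hZSX _ hzZ, ?_⟩, ?_⟩⟩
    · intro h; exact hQD (by rw [h]; exact hzQ)
    · intro hadj
      have hzX : zstar ∉ X := fun h => (hZout _ hzZ).1 (hXC h)
      exact hZSX _ hzZ ⟨hzX, x₀, hx₀, hadj.symm⟩
    · intro hro
      rw [reachOutside_iff_conn] at hro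
      exact hQD (hzQ.trans (conn_mono_graph le_satur hro).symm)
    · intro T hT hsep
      obtain ⟨t, htSX, htT⟩ := Set.exists_of_ssubset hT
      have hTSX : T ⊆ SX := hT.subset
      obtain ⟨htX, x_t, hx_t, hadj_t⟩ := id htSX
      have hXT : ∀ x ∈ X, x ∈ Tᶜ := fun x hx h => hXSX x hx (hTSX h)
      apply hsep.2.2.2
      rw [reachOutside_iff_conn]
      have h1 : Conn G Tᶜ x₀ x_t := by
        by_cases he : x₀ = x_t
        · rw [he]; exact Conn.refl (hXT _ hx_t)
        · exact Conn.of_adj (hXT _ hx₀) (hXT _ hx_t) (hXclG hx₀ hx_t he)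
      have h2 : Conn G Tᶜ x_t t := Conn.of_adj (hXT _ hx_t) htT hadj_t.symm
      have hZT : ∀ z ∈ Z, z ∈ Tᶜ := fun z hz h => hZSX z hz (hTSX h)
      by_cases htS : t ∈ S
      · obtain ⟨z_t, hz_tZ, hadj_tz⟩ := hZadj t htS
        have h3 : Conn G Tᶜ t z_t := Conn.of_adj htT (hZT _ hz_tZ) hadj_tz
        have h4 : Conn G Tᶜ z_t zstar := (hZconn _ hz_tZ _ hzZ).mono (fun y hy => hZT y hy)
        exact ((h1.trans h2).trans h3).trans h4
      · obtain ⟨b_t, hb_tQ, hadjb⟩ := hQfull t htSX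
        have hadjbG : G.Adj b_t t := (satur_adj_right htS).1 hadjb
        have h3 : Conn G Tᶜ t b_t :=
          Conn.of_adj htT (fun h => compl_not_mem (comp_subset hb_tQ) (hTSX h)) hadjbG.symm
        have hconv : Conn G (Comp H SXᶜ q₀) b_t zstar := by
          refine conn_induct ?_ (comp_pairwise_conn hb_tQ hzQ)
          intro a b ha hb hab
          rcases hab with hG | ⟨haS, hbS, hne⟩
          · exact Conn.of_adj ha hb hG
          · obtain ⟨za, hzaZ, hadja⟩ := hZadj a haS
            obtain ⟨zb, hzbZ, hadjb'⟩ := hZadj b hbS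
            have c1 : Conn G (Comp H SXᶜ q₀) a za := Conn.of_adj ha (hZQ _ hzaZ) hadja
            have c2 : Conn G (Comp H SXᶜ q₀) za zb :=
              (hZconn _ hzaZ _ hzbZ).mono (fun y hy => hZQ y hy)
            have c3 : Conn G (Comp H SXᶜ q₀) zb b := Conn.of_adj (hZQ _ hzbZ) hb hadjb'.symm
            exact (c1.trans c2).trans c3
        have h4 : Conn G Tᶜ b_t zstar := hconv.mono (fun p hp h => compl_not_mem (comp_subset hp) (hTSX h))
        exact ((h1.trans h2).trans h3).trans h4
  by_cases hUx : x₀ ∈ Comp H SXᶜ u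
  · have hWx : x₀ ∉ Comp H SXᶜ v := fun h => hdisjUW x₀ hUx h
    by_cases hWS : ∃ s ∈ S, s ∈ Comp H SXᶜ v
    · exact badcase v hvSX hWS hWx (fun t ht => (hfull2 t ht).2)
    · push_neg at hWS
      exact goodcase v hvSX (fun p hp hpS => hWS p hpS hp) hWx (fun t ht => (hfull2 t ht).2)
  · by_cases hUS : ∃ s ∈ S, s ∈ Comp H SXᶜ u
    · exact badcase u huSX hUS hUx (fun t ht => (hfull2 t ht).1)
    · push_neg at hUS
      exact goodcase u huSX (fun p hp hpS => hUS p hpS hp) hUx (fun t ht => (hfull2 t ht).1)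


/-! ### Main engine: every suitable region contains a moplex -/

lemma exists_moplex_in [Fintype V] :
    ∀ (n : ℕ) (G : SimpleGraph V) (C : Set V), C.ncard ≤ n → C.Nonempty → OtherSide G C →
      ∃ X, X ⊆ C ∧ IsMoplex G X := by
  intro n
  induction n with
  | zero =>
      intro G C hn hne _
      have hC : C = ∅ := (Set.ncard_eq_zero C.toFinite).1 (Nat.le_zero.1 hn)
      rw [hC] at hne
      exact absurd hne (by simp)
  | succ n ih =>
      intro G C hn hCne hOS
      by_cases hA : (∀ c ∈ C, ∀ c' ∈ C, c ≠ c' → G.Adj c c') ∧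
          (∀ s ∈ setNbhd G C, ∀ c ∈ C, G.Adj s c)
      · exact ⟨C, subset_rfl, caseA_moplex G C hCne hOS hA.1 hA.2⟩
      set S := setNbhd G C with hSdef
      set H := satur G S with hHdef
      have hCS : ∀ c ∈ C, c ∉ S := fun c hc h => h.1 hc
      have step : ∀ w y₀, y₀ ∈ C → y₀ ∉ closedNbhd H w →
          (∀ s ∈ S, s ∉ Comp H (closedNbhd H w)ᶜ y₀) →
          (∃ c ∈ C, c ∈ closedNbhd H w) →
          ∃ X, X ⊆ C ∧ IsMoplex G X := by
        intro w y₀ hy₀C hy₀n hS hcstar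
        set D := (closedNbhd H w)ᶜ with hDdef
        set Cw := Comp H D y₀ with hCwdef
        have hy₀D : y₀ ∈ D := hy₀n
        have hCwC : ∀ p ∈ Cw, p ∈ C := by
          intro p hp
          have key : p ∈ C ∩ Cw := by
            refine conn_closed (conn_in_comp hp) ⟨hy₀C, self_mem_comp hy₀D⟩ ?_
            intro a b ha haD hbD hab
            have hAG : G.Adj a b := (satur_adj_left (hCS a ha.1)).1 hab
            by_cases hbC : b ∈ C
            · exact ⟨hbC, hbD⟩
            · exact absurd hbD (fun h => hS b (closure_proto ha.1 hbC hAG) h)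
          exact key.1
        have hwN : w ∈ closedNbhd H w := Set.mem_insert _ _
        have hwCw : w ∉ Cw := fun h => compl_not_mem (comp_subset h) hwN
        have hwSN : w ∉ setNbhd H Cw := by
          rintro ⟨hwCw', x, hx, hadj⟩
          exact compl_not_mem (comp_subset hx) (mem_closedNbhd.2 (Or.inr hadj))
        have hSn : ∀ s' ∈ setNbhd H Cw, H.Adj w s' := by
          rintro s' hs'
          obtain ⟨hs'Cw, x, hx, hadj⟩ := id hs'
          by_cases hs'D : s' ∈ D
          · exact absurd (comp_step hx hs'D hadj.symm) hs'Cw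
          · have : s' ∈ closedNbhd H w := not_not.1 hs'D
            rcases mem_closedNbhd.1 this with rfl | h
            · exact absurd hs' hwSN
            · exact h
        obtain ⟨cstar, hcC, hcN⟩ := hcstar
        have hcCw : cstar ∉ Cw := fun h => compl_not_mem (comp_subset h) hcN
        have hss : Cw ⊂ C := by
          refine HasSubset.Subset.ssubset_of_ne (fun p hp => hCwC p hp) ?_
          intro he
          rw [he] at hcCw
          exact hcCw hcC
        have hncard : Cw.ncard ≤ n :=
          Nat.lt_succ_iff.1 (lt_of_lt_of_le (Set.ncard_lt_ncard hss C.toFinite) hn)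
        have hOSw : OtherSide H Cw := by
          refine Or.inr ⟨{w}, ⟨w, rfl⟩, ?_, ?_, ?_⟩
          · rintro z rfl
            exact ⟨hwCw, hwSN⟩
          · rintro z rfl z' rfl
            exact Conn.refl rfl
          · intro s' hs'
            exact ⟨w, rfl, (hSn s' hs').symm⟩
        obtain ⟨X, hXCw, hXmoH⟩ := ih H Cw hncard ⟨y₀, self_mem_comp hy₀D⟩ hOSw
        have hXC : X ⊆ C := fun x hx => hCwC x (hXCw hx)
        exact ⟨X, hXC, transfer G C X hXC hOS hXmoH⟩
      rcases not_and_or.1 hA with hP | hQ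
      · push_neg at hP
        obtain ⟨x, hxC, y, hyC, hne, hnadj⟩ := hP
        have hyn : y ∉ closedNbhd H x := by
          intro h
          rcases mem_closedNbhd.1 h with rfl | h'
          · exact hne rfl
          · exact hnadj ((satur_adj_left (hCS x hxC)).1 h')
        by_cases hs : ∃ s ∈ S, s ∈ Comp H (closedNbhd H x)ᶜ y
        · obtain ⟨s, hsS, hsCw⟩ := hs
          have hsn : s ∉ closedNbhd H x := compl_not_mem (comp_subset hsCw)
          have hsx : ¬ G.Adj s x ∧ s ≠ x := by
            constructor
            · intro h
              exact hsn (mem_closedNbhd.2 (Or.inr (le_satur h.symm)))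
            · intro h
              exact hsn (mem_closedNbhd.2 (Or.inl h))
          refine step s x hxC ?_ ?_ ?_
          · intro h
            rcases mem_closedNbhd.1 h with rfl | h'
            · exact hsx.2 rfl
            · exact hsx.1 ((satur_adj_right (hCS x hxC)).1 h')
          · intro s' hs' h
            have hs'n : s' ∉ closedNbhd H s := compl_not_mem (comp_subset h)
            by_cases he : s' = s
            · rw [he] at hs'n
              exact hs'n (Set.mem_insert _ _)
            · exact hs'n (mem_closedNbhd.2 (Or.inr (Or.inr ⟨hsS, hs', fun hh => he hh.symm⟩)))
          · obtain ⟨hsC', c₁, hc₁, hadj⟩ := hsS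
            exact ⟨c₁, hc₁, mem_closedNbhd.2 (Or.inr (le_satur hadj))⟩
        · push_neg at hs
          exact step x y hyC hyn hs ⟨x, hxC, Set.mem_insert _ _⟩
      · push_neg at hQ
        obtain ⟨s, hsS, c₀, hc₀C, hnadj⟩ := hQ
        refine step s c₀ hc₀C ?_ ?_ ?_
        · intro h
          rcases mem_closedNbhd.1 h with rfl | h'
          · exact (hCS c₀ hc₀C) hsS
          · exact hnadj ((satur_adj_right (hCS c₀ hc₀C)).1 h')
        · intro s' hs' h
          have hs'n : s' ∉ closedNbhd H s := compl_not_mem (comp_subset h)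
          by_cases he : s' = s
          · rw [he] at hs'n
            exact hs'n (Set.mem_insert _ _)
          · exact hs'n (mem_closedNbhd.2 (Or.inr (Or.inr ⟨hsS, hs', fun hh => he hh.symm⟩)))
        · obtain ⟨hsC', c₁, hc₁, hadj⟩ := hsS
          exact ⟨c₁, hc₁, mem_closedNbhd.2 (Or.inr (le_satur hadj))⟩


/-! ### Application to asteroidal sets -/

lemma ro_symm {G : SimpleGraph V} {S : Set V} {u v : V}
    (h : ReachOutside G S u v) : ReachOutside G S v u :=
  reachOutside_iff_conn.2 (reachOutside_iff_conn.1 h).symm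

lemma ro_trans {G : SimpleGraph V} {S : Set V} {u v w : V}
    (h1 : ReachOutside G S u v) (h2 : ReachOutside G S v w) : ReachOutside G S u w :=
  reachOutside_iff_conn.2 ((reachOutside_iff_conn.1 h1).trans (reachOutside_iff_conn.1 h2))

lemma asteroidal_indep {G : SimpleGraph V} {A : Set V} (hA : IsAsteroidal G A)
    {a b : V} (ha : a ∈ A) (hb : b ∈ A) (hne : b ≠ a) : b ∉ closedNbhd G a := by
  obtain ⟨p, hp⟩ := hA a ha b hb b hb hne hne
  exact hp b (Walk.start_mem_support _)

lemma singleton_asteroidal {G : SimpleGraph V} {x : V} : IsAsteroidal G {x} := by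
  intro a ha p hp q hq hpa _
  rw [Set.mem_singleton_iff] at ha hp
  exact absurd (hp.trans ha.symm) hpa

/-- The replacement lemma: any vertex of an asteroidal set can be replaced by any
vertex of a suitable moplex. -/
lemma replace [Fintype V] (G : SimpleGraph V) {A : Set V} (hA : IsAsteroidal G A)
    {a : V} (ha : a ∈ A) :
    ∃ X, IsMoplex G X ∧ ∀ x ∈ X, x ∉ A \ {a} ∧ IsAsteroidal G (insert x (A \ {a})) := by
  classical
  by_cases hB : (A \ {a}).Nonempty
  case neg =>
    have hBempty : A \ {a} = ∅ := Set.not_nonempty_iff_eq_empty.1 hB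
    set D := Comp G (Set.univ : Set V) a with hDdef
    have haD : a ∈ D := self_mem_comp (Set.mem_univ a)
    have hOS : OtherSide G D := by
      left
      refine Set.eq_empty_iff_forall_notMem.2 ?_
      rintro v ⟨hvD, d, hd, hadj⟩
      exact hvD (comp_step hd (Set.mem_univ v) hadj.symm)
    obtain ⟨X, hXD, hXmo⟩ := exists_moplex_in D.ncard G D le_rfl ⟨a, haD⟩ hOS
    refine ⟨X, hXmo, ?_⟩
    intro x _
    rw [hBempty]
    have h2 : insert x (∅ : Set V) = {x} := by simp
    rw [h2]
    exact ⟨by simp, singleton_asteroidal⟩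
  case pos =>
    obtain ⟨b₀, hb₀⟩ := hB
    have hb₀A : b₀ ∈ A := hb₀.1
    have hb₀a : b₀ ≠ a := fun h => hb₀.2 (by rw [h]; exact Set.mem_singleton _)
    have hNa : ∀ b ∈ A, b ≠ a → b ∉ closedNbhd G a := fun b hb hne => asteroidal_indep hA ha hb hne
    set C := Comp G (closedNbhd G a)ᶜ b₀ with hCdef
    have hb₀C : b₀ ∈ C := self_mem_comp (hNa b₀ hb₀A hb₀a)
    have hBC : ∀ b ∈ A \ {a}, b ∈ C := by
      intro b hb
      have hba : b ≠ a := fun h => hb.2 (by rw [h]; exact Set.mem_singleton _)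
      exact reachOutside_iff_conn.1 (hA a ha b₀ hb₀A b hb.1 hb₀a hba)
    set S₁ := setNbhd G C with hS₁def
    have haC : a ∉ C := fun h => compl_not_mem (comp_subset h) (Set.mem_insert _ _)
    have haS₁ : a ∉ S₁ := by
      rintro ⟨_, c, hc, hadj⟩
      exact compl_not_mem (comp_subset hc) (mem_closedNbhd.2 (Or.inr hadj))
    set D := Comp G S₁ᶜ a with hDdef
    have haD : a ∈ D := self_mem_comp haS₁
    have hDC : ∀ d ∈ D, d ∉ C := by
      intro d hd
      refine conn_closed (conn_in_comp hd) (P := {v | v ∉ C}) haC ?_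
      intro p q hp hpD hqD hadj
      intro hqC
      exact compl_not_mem (comp_subset hpD) (closure_proto hqC hp hadj.symm)
    have hSD : ∀ s ∈ setNbhd G D, s ∈ S₁ := by
      rintro s ⟨hsD, d, hd, hadj⟩
      by_contra hsS₁
      exact hsD (comp_step hd hsS₁ hadj.symm)
    have hOS : OtherSide G D := by
      by_cases h0 : setNbhd G D = ∅
      · exact Or.inl h0
      refine Or.inr ⟨C, ⟨b₀, hb₀C⟩, ?_, ?_, ?_⟩
      · intro z hz
        exact ⟨fun hzD => hDC z hzD hz, fun h => (hSD z h).1 hz⟩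
      · intro z hz z' hz'
        exact comp_pairwise_conn hz hz'
      · intro s hs
        obtain ⟨_, c, hc, hadj⟩ := hSD s hs
        exact ⟨c, hc, hadj⟩
    obtain ⟨X, hXD, hXmo⟩ := exists_moplex_in D.ncard G D le_rfl ⟨a, haD⟩ hOS
    refine ⟨X, hXmo, ?_⟩
    intro x hx
    have hxD : x ∈ D := hXD hx
    have cond1 : ∀ b ∈ A \ {a}, ReachOutside G (closedNbhd G b) a x := by
      intro b hb
      rw [reachOutside_iff_conn]
      refine (conn_in_comp hxD).mono ?_
      intro d hd hdN
      rcases mem_closedNbhd.1 hdN with rfl | hadj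
      · exact hDC _ hd (hBC _ hb)
      · exact compl_not_mem (comp_subset hd)
          (closure_proto (hBC b hb) (hDC d hd) hadj)
    have cond2 : ∀ b ∈ A \ {a}, ∀ b' ∈ A \ {a}, ReachOutside G (closedNbhd G x) b b' := by
      intro b hb b' hb'
      rw [reachOutside_iff_conn]
      refine (comp_pairwise_conn (hBC b hb) (hBC b' hb')).mono ?_
      intro c hc hcN
      rcases mem_closedNbhd.1 hcN with rfl | hadj
      · exact hDC _ hxD hc
      · exact compl_not_mem (comp_subset hxD) (closure_proto hc (hDC x hxD) hadj.symm)
    have hxB : x ∉ A \ {a} := fun h => hDC x hxD (hBC x h)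
    refine ⟨hxB, ?_⟩
    intro w hw p hp q hq hpw hqw
    rcases Set.mem_insert_iff.1 hw with rfl | hwB
    · have hpB : p ∈ A \ {a} := (Set.mem_insert_iff.1 hp).resolve_left hpw
      have hqB : q ∈ A \ {a} := (Set.mem_insert_iff.1 hq).resolve_left hqw
      exact cond2 p hpB q hqB
    · have hwA : w ∈ A := hwB.1
      have hwa : w ≠ a := fun h => hwB.2 (by rw [h]; exact Set.mem_singleton _)
      have ROax : ReachOutside G (closedNbhd G w) a x := cond1 w hwB
      have ROpa : ReachOutside G (closedNbhd G w) p a := by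
        rcases Set.mem_insert_iff.1 hp with rfl | hpB
        · exact ro_symm ROax
        · exact hA w hwA p hpB.1 a ha hpw (fun h => hwa h.symm)
      have ROaq : ReachOutside G (closedNbhd G w) a q := by
        rcases Set.mem_insert_iff.1 hq with rfl | hqB
        · exact ROax
        · exact hA w hwA a ha q hqB.1 (fun h => hwa h.symm) hqw
      exact ro_trans ROpa ROaq

lemma improve [Fintype V] (G : SimpleGraph V) :
    ∀ (m : ℕ) (A : Set V), IsAsteroidal G A → {a ∈ A | ¬ Moplicial G a}.ncard ≤ m →
      ∃ A', IsAsteroidal G A' ∧ A'.ncard = A.ncard ∧ ∀ a ∈ A', Moplicial G a := by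
  intro m
  induction m with
  | zero =>
      intro A hA hm
      have hemp : {a ∈ A | ¬ Moplicial G a} = ∅ :=
        (Set.ncard_eq_zero (Set.toFinite _)).1 (Nat.le_zero.1 hm)
      refine ⟨A, hA, rfl, ?_⟩
      intro a ha
      by_contra hmop
      have hmem : a ∈ ({a ∈ A | ¬ Moplicial G a} : Set V) := ⟨ha, hmop⟩
      rw [hemp] at hmem
      exact hmem
  | succ m ih =>
      intro A hA hm
      by_cases hall : ∀ a ∈ A, Moplicial G a
      · exact ⟨A, hA, rfl, hall⟩
      push_neg at hall
      obtain ⟨a, haA, hnm⟩ := hall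
      obtain ⟨X, hXmo, hXrep⟩ := replace G hA haA
      obtain ⟨x, hxX⟩ := hXmo.1
      obtain ⟨hxB, hast⟩ := hXrep x hxX
      have hxmop : Moplicial G x := ⟨X, hXmo, hxX⟩
      have hApos : 0 < A.ncard := (Set.ncard_pos (Set.toFinite _)).2 ⟨a, haA⟩
      have hcard : (insert x (A \ {a})).ncard = A.ncard := by
        rw [Set.ncard_insert_of_notMem hxB (Set.toFinite _),
          Set.ncard_diff_singleton_of_mem haA]
        omega
      have hbadsub : {b ∈ insert x (A \ {a}) | ¬ Moplicial G b} ⊆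
          {b ∈ A | ¬ Moplicial G b} \ {a} := by
        rintro b ⟨hbA'', hbnm⟩
        rcases Set.mem_insert_iff.1 hbA'' with rfl | hbB
        · exact absurd hxmop hbnm
        · exact ⟨⟨hbB.1, hbnm⟩, hbB.2⟩
      have hbad : {b ∈ insert x (A \ {a}) | ¬ Moplicial G b}.ncard ≤ m := by
        have h1 := Set.ncard_le_ncard hbadsub (Set.toFinite _)
        have h2 : ({b ∈ A | ¬ Moplicial G b} \ {a}).ncard =
            {b ∈ A | ¬ Moplicial G b}.ncard - 1 :=
          Set.ncard_diff_singleton_of_mem ⟨haA, hnm⟩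
        have h3 : 0 < ({b ∈ A | ¬ Moplicial G b} : Set V).ncard :=
          (Set.ncard_pos (Set.toFinite _)).2 ⟨a, haA, hnm⟩
        omega
      obtain ⟨A', h1, h2, h3⟩ := ih (insert x (A \ {a})) hast hbad
      exact ⟨A', h1, h2.trans hcard, h3⟩



/-- If `G` has an asteroidal set of size `k`, then it has an asteroidal set of size `k`
all of whose vertices are moplicial; consequently the asteroidal number is at most the
number of moplexes. -/
theorem asteroidal_set_of_moplicial {V : Type*} [Fintype V] (G : SimpleGraph V)
    (A : Set V) (k : ℕ) (hA : IsAsteroidal G A) (hk : A.ncard = k) :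
    (∃ A' : Set V, IsAsteroidal G A' ∧ A'.ncard = k ∧ ∀ a ∈ A', Moplicial G a) ∧
      k ≤ {X : Set V | IsMoplex G X}.ncard := by
  classical
  obtain ⟨A', hA', hcard, hmop⟩ := improve G ({a ∈ A | ¬ Moplicial G a}.ncard) A hA le_rfl
  have hcard' : A'.ncard = k := hcard.trans hk
  refine ⟨⟨A', hA', hcard', hmop⟩, ?_⟩
  have hindep : ∀ p ∈ A', ∀ q ∈ A', p ≠ q → ¬ G.Adj p q := by
    intro p hp q hq hne hadj
    obtain ⟨w, hw⟩ := hA' p hp q hq q hq hne.symm hne.symm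
    exact hw q (SimpleGraph.Walk.start_mem_support _) (mem_closedNbhd.2 (Or.inr hadj))
  set f : V → Set V := fun a => if h : Moplicial G a then h.choose else ∅ with hfdef
  have hf : ∀ a ∈ A', IsMoplex G (f a) ∧ a ∈ f a := by
    intro a ha
    have h := hmop a ha
    simp only [hfdef, dif_pos h]
    exact h.choose_spec
  have hinj : Set.InjOn f A' := by
    intro p hp q hq hfe
    by_contra hne
    have hpf := (hf p hp).2
    have hqf := (hf q hq).2
    rw [hfe] at hpf
    exact hindep p hp q hq hne ((hf q hq).1.2.1.1 hpf hqf hne)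
  have himg : f '' A' ⊆ {X : Set V | IsMoplex G X} := by
    rintro Y ⟨a, ha, rfl⟩
    exact (hf a ha).1
  calc k = A'.ncard := hcard'.symm
    _ = (f '' A').ncard := (Set.ncard_image_of_injOn hinj).symm
    _ ≤ _ := Set.ncard_le_ncard himg (Set.toFinite _)

end MoplexPaper
end

section
/- Let G be a non-complete graph with exactly two moplexes U and W. Then U and W are disjoint, and both are simplicial moplexes, i.e., N(U) and N(W) are cliques. -/
open SimpleGraph

namespace MoplexPaper

variable {V : Type*}

/-! ### Auxiliary infrastructure -/

section Aux

variable {G : SimpleGraph V} {S A B C D T X Y M U W : Set V} {u v w s a b c d : V}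

lemma reach_refl (hu : u ∉ S) : ReachOutside G S u u :=
  ⟨Walk.nil, by simp [hu]⟩

lemma reach_symm (h : ReachOutside G S u v) : ReachOutside G S v u := by
  obtain ⟨p, hp⟩ := h
  exact ⟨p.reverse, by simpa using hp⟩

lemma reach_trans (h : ReachOutside G S u v) (h' : ReachOutside G S v w) :
    ReachOutside G S u w := by
  obtain ⟨p, hp⟩ := h; obtain ⟨q, hq⟩ := h'
  refine ⟨p.append q, fun x hx => ?_⟩
  rw [Walk.mem_support_append_iff] at hx
  exact hx.elim (hp x) (hq x)

lemma reach_start_not_mem (h : ReachOutside G S u v) : u ∉ S := by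
  obtain ⟨p, hp⟩ := h; exact hp u p.start_mem_support

lemma reach_end_not_mem (h : ReachOutside G S u v) : v ∉ S := by
  obtain ⟨p, hp⟩ := h; exact hp v p.end_mem_support

lemma reach_adj (h : ReachOutside G S u v) (hvw : G.Adj v w) (hw : w ∉ S) :
    ReachOutside G S u w :=
  reach_trans h ⟨hvw.toWalk, by
    intro x hx
    simp only [Walk.support_cons, Walk.support_nil, List.mem_cons, List.mem_singleton] at hx
    rcases hx with rfl | rfl | hfalse
    · exact reach_end_not_mem h
    · exact hw
    · cases hfalse⟩

/-- walks avoiding the neighbourhood of `A` that start in `A` stay in `A` -/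
lemma walk_confined (p : G.Walk u v) (hu : u ∈ A)
    (hp : ∀ x ∈ p.support, x ∉ setNbhd G A) : ∀ x ∈ p.support, x ∈ A := by
  induction p with
  | nil => intro x hx; simp at hx; subst hx; exact hu
  | @cons a b c hab q ih =>
    intro x hx
    have hb : b ∈ A := by
      by_contra hbA
      exact hp b (by simp) ⟨hbA, a, hu, hab.symm⟩
    simp only [Walk.support_cons, List.mem_cons] at hx
    rcases hx with rfl | hx
    · exact hu
    · exact ih hb (fun y hy => hp y (by simp [hy])) x hx

lemma reach_confined (hAS : setNbhd G A ⊆ S) (hu : u ∈ A)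
    (h : ReachOutside G S u v) : v ∈ A := by
  obtain ⟨p, hp⟩ := h
  exact walk_confined p hu (fun x hx hxA => hp x hx (hAS hxA)) v p.end_mem_support

lemma exists_isSeparator (huv : u ≠ v) (hadj : ¬ G.Adj u v) :
    IsSeparator G u v ((Set.univ : Set V) \ {u, v}) := by
  refine ⟨hadj, by simp, by simp, ?_⟩
  rintro ⟨p, hp⟩
  cases p with
  | nil => exact huv rfl
  | cons h q =>
    rename_i b
    have hb : ¬ b = u → b = v := by
      have := hp b (by simp)
      simpa [Set.mem_diff, not_and, not_not] using this
    have hbu : b ≠ u := fun e => G.irrefl (e ▸ h)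
    cases q with
    | nil => exact hadj h
    | cons h' q' =>
      have hbv := hb hbu
      subst hbv
      exact hadj h

lemma exists_minSeparator [Finite V] (huv : u ≠ v) (hadj : ¬ G.Adj u v) :
    ∃ S, IsMinSeparator G u v S := by
  have hne : {S : Set V | IsSeparator G u v S}.Nonempty :=
    ⟨_, exists_isSeparator huv hadj⟩
  obtain ⟨S, hS, hmin⟩ := (Set.toFinite _).exists_minimal hne
  refine ⟨S, hS, fun T hT hTsep => ?_⟩
  have h2 : S = T := le_antisymm (hmin hTsep hT.le) hT.le
  exact hT.ne h2.symm

private lemma walk_hits_aux (hno : ∀ k, ReachOutside G S u k → ¬ G.Adj s k)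
    (hnr : ¬ ReachOutside G S u v) :
    ∀ (a : V) (q : G.Walk a v), ReachOutside G S u a →
      (∀ x ∈ q.support, x ∉ S \ {s}) → False := by
  intro a q
  induction q with
  | nil => exact fun hra _ => hnr hra
  | @cons a b c hab q ih =>
    intro hra hq
    by_cases hbs : b = s
    · exact hno a hra (hbs ▸ hab.symm)
    · have hbS : b ∉ S := fun hb => hq b (by simp) ⟨hb, hbs⟩
      exact ih hnr (reach_adj hra hab hbS) (fun x hx => hq x (by simp [hx]))

lemma minSep_full (h : IsMinSeparator G u v S) (hs : s ∈ S) :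
    ∃ k, ReachOutside G S u k ∧ G.Adj s k := by
  classical
  by_contra hno
  push_neg at hno
  refine h.2 (S \ {s}) ⟨Set.diff_subset, fun hsub => (hsub hs).2 rfl⟩
    ⟨h.1.1, fun hu => h.1.2.1 hu.1, fun hv => h.1.2.2.1 hv.1, ?_⟩
  rintro ⟨p, hp⟩
  exact walk_hits_aux hno h.1.2.2.2 u p (reach_refl h.1.2.1) hp

lemma minSep_symm (h : IsMinSeparator G u v S) : IsMinSeparator G v u S := by
  have symm1 : ∀ T : Set V, IsSeparator G u v T → IsSeparator G v u T := by
    rintro T ⟨h1, h2, h3, h4⟩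
    exact ⟨fun ha => h1 ha.symm, h3, h2, fun hr => h4 (reach_symm hr)⟩
  have symm2 : ∀ T : Set V, IsSeparator G v u T → IsSeparator G u v T := by
    rintro T ⟨h1, h2, h3, h4⟩
    exact ⟨fun ha => h1 ha.symm, h3, h2, fun hr => h4 (reach_symm hr)⟩
  exact ⟨symm1 S h.1, fun T hT hsep => h.2 T hT (symm2 T hsep)⟩

/-! ### components -/

/-- all members of `A` are joined by walks inside `A` -/
def ConnWithin (G : SimpleGraph V) (A : Set V) : Prop :=
  ∀ a ∈ A, ∀ b ∈ A, ∃ p : G.Walk a b, ∀ x ∈ p.support, x ∈ A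

/-- the reach component of `u` in `G - S` -/
def Rcomp (G : SimpleGraph V) (S : Set V) (u : V) : Set V :=
  {v | ReachOutside G S u v}

lemma mem_Rcomp_self (hu : u ∉ S) : u ∈ Rcomp G S u := reach_refl hu

lemma Rcomp_disjoint_sep : Disjoint (Rcomp G S u) S :=
  Set.disjoint_left.2 fun _ h => reach_end_not_mem h

lemma Rcomp_closed (hv : v ∈ Rcomp G S u) (h : G.Adj v w) (hw : w ∉ S) :
    w ∈ Rcomp G S u := reach_adj hv h hw

lemma Rcomp_connWithin : ConnWithin G (Rcomp G S u) := by
  intro a ha b hb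
  obtain ⟨p, hp⟩ := reach_trans (reach_symm ha) hb
  classical
  refine ⟨p, fun x hx => ?_⟩
  exact reach_trans ha ⟨p.takeUntil x hx, fun y hy => hp y (p.support_takeUntil_subset hx hy)⟩

lemma setNbhd_Rcomp_subset : setNbhd G (Rcomp G S u) ⊆ S := by
  rintro v ⟨hv, x, hx, hadj⟩
  by_contra hvS
  exact hv (Rcomp_closed hx hadj.symm hvS)

lemma Rcomp_eq_of_minSep (h : IsMinSeparator G u v S) :
    setNbhd G (Rcomp G S u) = S := by
  refine Set.Subset.antisymm setNbhd_Rcomp_subset (fun s hs => ?_)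
  obtain ⟨k, hk, hadj⟩ := minSep_full h hs
  exact ⟨fun hsR => reach_end_not_mem hsR hs, k, hk, hadj⟩

lemma Rcomp_disjoint_of_sep (h : ¬ ReachOutside G S u v) :
    Disjoint (Rcomp G S u) (Rcomp G S v) :=
  Set.disjoint_left.2 fun x hx hx' => h (reach_trans hx (reach_symm hx'))

lemma conn_of_clique (h : G.IsClique A) : ConnWithin G A := by
  intro a ha b hb
  rcases eq_or_ne a b with rfl | hab
  · exact ⟨Walk.nil, by simpa using ha⟩
  · refine ⟨(h ha hb hab).toWalk, ?_⟩
    intro x hx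
    simp only [Walk.support_cons, Walk.support_nil, List.mem_cons, List.mem_singleton] at hx
    rcases hx with rfl | rfl | hfalse
    · exact ha
    · exact hb
    · cases hfalse

/-- the key criterion for minimal separators -/
lemma sep_criterion (hAB : Disjoint A B)
    (hcA : ConnWithin G A) (hcB : ConnWithin G B)
    (hNA : setNbhd G A = S) (hNB : setNbhd G B = S)
    {a b : V} (ha : a ∈ A) (hb : b ∈ B) :
    a ≠ b ∧ IsMinSeparator G a b S := by
  have hAS : Disjoint A S := hNA ▸ Set.disjoint_left.2 fun x hx hx' => hx'.1 hx
  have hBS : Disjoint B S := hNB ▸ Set.disjoint_left.2 fun x hx hx' => hx'.1 hx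
  have hadj : ¬ G.Adj a b := by
    intro hab
    by_cases hbA : b ∈ A
    · exact hAB.ne_of_mem hbA hb rfl
    · have : b ∈ setNbhd G A := ⟨hbA, a, ha, hab.symm⟩
      exact hBS.ne_of_mem hb (hNA ▸ this) rfl
  refine ⟨hAB.ne_of_mem ha hb, ⟨hadj, fun h => hAS.ne_of_mem ha h rfl,
    fun h => hBS.ne_of_mem hb h rfl, ?_⟩, ?_⟩
  · rintro hre
    exact hAB.ne_of_mem (reach_confined (le_of_eq hNA) ha hre) hb rfl
  · rintro T' hT' ⟨-, -, -, hnr⟩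
    obtain ⟨s, hsS, hsT⟩ := Set.exists_of_ssubset hT'
    have hT'S : T' ⊆ S := hT'.le
    obtain ⟨a', ha', hsa⟩ := (hNA ▸ hsS : s ∈ setNbhd G A).2
    obtain ⟨b', hb', hsb⟩ := (hNB ▸ hsS : s ∈ setNbhd G B).2
    obtain ⟨p1, hp1⟩ := hcA a ha a' ha'
    obtain ⟨p2, hp2⟩ := hcB b' hb' b hb
    refine hnr ⟨(p1.append (Walk.cons hsa.symm (Walk.cons hsb p2))), fun x hx => ?_⟩
    rw [Walk.mem_support_append_iff] at hx
    rcases hx with hx | hx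
    · exact fun hxT => hAS.ne_of_mem (hp1 x hx) (hT'S hxT) rfl
    · simp only [Walk.support_cons, List.mem_cons] at hx
      rcases hx with rfl | rfl | hx
      · exact fun hxT => hAS.ne_of_mem ha' (hT'S hxT) rfl
      · exact hsT
      · exact fun hxT => hBS.ne_of_mem (hp2 x hx) (hT'S hxT) rfl

/-! ### disjointness of distinct moplexes -/

lemma moplex_disjoint (hU : IsMoplex G U) (hW : IsMoplex G W) (hUW : U ≠ W) :
    Disjoint U W := by
  rw [Set.disjoint_left]
  intro v hvU hvW
  have hcliqueU := hU.2.1.1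
  have hcliqueW := hW.2.1.1
  have hadjUW : ∀ u ∈ U, ∀ w ∈ W, u ≠ w → G.Adj u w := by
    intro u hu w hw huw
    by_cases hwU : w ∈ U
    · exact hcliqueU hu hwU huw
    · have := (hU.2.1.2 w hwU).resolve_right (fun hnone => hnone v hvU (hcliqueW hw hvW ?_))
      · exact (this u hu).symm
      · rintro rfl; exact hwU hvU
  have hclique : G.IsClique (U ∪ W) := by
    rintro x (hx | hx) y (hy | hy) hxy
    · exact hcliqueU hx hy hxy
    · exact hadjUW x hx y hy hxy
    · exact (hadjUW y hy x hx (Ne.symm hxy)).symm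
    · exact hcliqueW hx hy hxy
  have hmod : IsModule G (U ∪ W) := by
    intro z hz
    have hzU : z ∉ U := fun h => hz (Or.inl h)
    have hzW : z ∉ W := fun h => hz (Or.inr h)
    rcases hU.2.1.2 z hzU with hall | hnone
    · left
      rintro x (hx | hx)
      · exact hall x hx
      · by_cases hxU : x ∈ U
        · exact hall x hxU
        · exact ((hW.2.1.2 z hzW).resolve_right (fun hn => hn v hvW (hall v hvU))) x hx
    · right
      rintro x (hx | hx)
      · exact hnone x hx
      · exact ((hW.2.1.2 z hzW).resolve_left (fun ha => hnone v hvU (ha v hvW))) x hx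
  have h1 : U ∪ W = U := hU.2.2.1 _ Set.subset_union_left ⟨hclique, hmod⟩
  have h2 : U ∪ W = W := hW.2.2.1 _ Set.subset_union_right ⟨hclique, hmod⟩
  exact hUW (h1 ▸ h2)

end Aux


/-! ### the saturated restricted graph -/

section Sat

variable {G : SimpleGraph V} {S C D T X Y M : Set V} {u v w s a b : V}

/-- restriction of `G` to `C ∪ T` with `T` turned into a clique -/
def satG (G : SimpleGraph V) (C T : Set V) : SimpleGraph V where
  Adj a b := (a ∈ C ∪ T ∧ b ∈ C ∪ T ∧ G.Adj a b) ∨ (a ∈ T ∧ b ∈ T ∧ a ≠ b)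
  symm := by
    constructor
    rintro a b (⟨h1, h2, h3⟩ | ⟨h1, h2, h3⟩)
    · exact Or.inl ⟨h2, h1, h3.symm⟩
    · exact Or.inr ⟨h2, h1, h3.symm⟩
  loopless := by
    constructor
    rintro a (⟨-, -, h⟩ | ⟨-, -, h⟩)
    · exact G.irrefl h
    · exact h rfl

lemma satG_adj_mem_left (h : (satG G C T).Adj a b) : a ∈ C ∪ T := by
  rcases h with ⟨h1, -, -⟩ | ⟨h1, -, -⟩
  · exact h1
  · exact Or.inr h1

lemma satG_adj_mem_right (h : (satG G C T).Adj a b) : b ∈ C ∪ T :=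
  satG_adj_mem_left h.symm

lemma adj_to_C_mem (hNC : setNbhd G C = T) (hb : b ∈ C) (h : G.Adj a b) :
    a ∈ C ∪ T := by
  by_cases haC : a ∈ C
  · exact Or.inl haC
  · exact Or.inr (hNC ▸ ⟨haC, b, hb, h⟩)

/-- for targets in `C`, adjacency in `satG` coincides with adjacency in `G` -/
lemma satG_adj_C (hCT : Disjoint C T) (hNC : setNbhd G C = T) (hb : b ∈ C) :
    (satG G C T).Adj a b ↔ G.Adj a b := by
  constructor
  · rintro (⟨-, -, h⟩ | ⟨-, h2, -⟩)
    · exact h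
    · exact absurd rfl (hCT.ne_of_mem hb h2)
  · intro h
    exact Or.inl ⟨adj_to_C_mem hNC hb h, Or.inl hb, h⟩

lemma satG_walk_support (p : (satG G C T).Walk a b) (ha : a ∈ C ∪ T) :
    ∀ x ∈ p.support, x ∈ C ∪ T := by
  induction p with
  | nil => intro x hx; simp at hx; subst hx; exact ha
  | @cons a' b' c' hab q ih =>
    intro x hx
    simp only [Walk.support_cons, List.mem_cons] at hx
    rcases hx with rfl | hx
    · exact ha
    · exact ih (satG_adj_mem_right hab) x hx

lemma satG_reach_CT (ha : a ∈ C ∪ T) (h : ReachOutside (satG G C T) S a v) :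
    v ∈ C ∪ T := by
  obtain ⟨p, -⟩ := h
  exact satG_walk_support p ha v p.end_mem_support

/-- a `satG`-walk inside a subset of `C` yields a `G`-walk inside it -/
lemma satG_walk_toG (hCT : Disjoint C T) (hNC : setNbhd G C = T) (hXC : X ⊆ C)
    (p : (satG G C T).Walk a b) (hp : ∀ x ∈ p.support, x ∈ X) :
    ∃ q : G.Walk a b, ∀ x ∈ q.support, x ∈ X := by
  induction p with
  | nil =>
    exact ⟨Walk.nil, by intro x hx; simp at hx; subst hx; exact hp _ (by simp)⟩
  | @cons a' b' c' hab q ih =>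
    have hb' : b' ∈ X := hp b' (by simp)
    obtain ⟨q', hq'⟩ := ih (fun x hx => hp x (by simp [hx]))
    refine ⟨Walk.cons ((satG_adj_C hCT hNC (hXC hb')).1 hab) q', fun x hx => ?_⟩
    simp only [Walk.support_cons, List.mem_cons] at hx
    rcases hx with rfl | hx
    · exact hp _ (by simp)
    · exact hq' x hx

/-- the neighbourhood of a subset of `C` is the same in `G` and in `satG` -/
lemma setNbhd_satG_eq (hCT : Disjoint C T) (hNC : setNbhd G C = T) (hXC : X ⊆ C) :
    setNbhd (satG G C T) X = setNbhd G X := by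
  ext v
  constructor
  · rintro ⟨hv, x, hx, hadj⟩
    exact ⟨hv, x, hx, (satG_adj_C hCT hNC (hXC hx)).1 hadj⟩
  · rintro ⟨hv, x, hx, hadj⟩
    exact ⟨hv, x, hx, (satG_adj_C hCT hNC (hXC hx)).2 hadj⟩

/-- converting a `satG`-edge into `G`-reachability, re-routing `T`–`T` edges
through `D` -/
lemma satG_edge_reach (hND : setNbhd G D = T) (hcD : ConnWithin G D)
    (hDS : ∀ x ∈ D, x ∉ S) (hab : (satG G C T).Adj a b)
    (haS : a ∉ S) (hbS : b ∉ S) : ReachOutside G S a b := by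
  rcases hab with ⟨-, -, h⟩ | ⟨h1, h2, -⟩
  · exact reach_adj (reach_refl haS) h hbS
  · obtain ⟨-, da, hda, hada⟩ := (hND ▸ h1 : a ∈ setNbhd G D)
    obtain ⟨-, db, hdb, hbdb⟩ := (hND ▸ h2 : b ∈ setNbhd G D)
    obtain ⟨p, hp⟩ := hcD da hda db hdb
    have r1 : ReachOutside G S a da := reach_adj (reach_refl haS) hada (hDS da hda)
    have r2 : ReachOutside G S da db := ⟨p, fun x hx => hDS x (hp x hx)⟩
    exact reach_adj (reach_trans r1 r2) hbdb.symm hbS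

lemma satG_walk_reachG (hND : setNbhd G D = T) (hcD : ConnWithin G D)
    (hDS : ∀ x ∈ D, x ∉ S) (p : (satG G C T).Walk a b)
    (hp : ∀ x ∈ p.support, x ∉ S) : ReachOutside G S a b := by
  induction p with
  | nil => exact reach_refl (hp _ (by simp))
  | @cons a' b' c' hab q ih =>
    have h1 : ReachOutside G S a' b' :=
      satG_edge_reach hND hcD hDS hab (hp _ (by simp)) (hp b' (by simp))
    exact reach_trans h1 (ih (fun x hx => hp x (by simp [hx])))

end Sat


section Transfer

variable {G : SimpleGraph V} {S C D T X Y M : Set V} {u v w s a b : V}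

lemma moplex_transfer (hCD : Disjoint C D) (hCT : Disjoint C T) (hDT : Disjoint D T)
    (hD : D.Nonempty) (hcD : ConnWithin G D)
    (hNC : setNbhd G C = T) (hND : setNbhd G D = T)
    (hM : IsMoplex (satG G C T) M) (hMC : M ⊆ C) :
    IsMoplex G M := by
  classical
  have hadjC : ∀ (x : V) {y : V}, y ∈ M → ((satG G C T).Adj x y ↔ G.Adj x y) :=
    fun x y hy => satG_adj_C hCT hNC (hMC hy)
  have hMne := hM.1
  obtain ⟨m, hm⟩ := hMne
  have hMclG : G.IsClique M := fun x hx y hy hxy =>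
    (hadjC x hy).1 (hM.2.1.1 hx hy hxy)
  have hMmodG : IsModule G M := by
    intro v hv
    rcases hM.2.1.2 v hv with hall | hnone
    · exact Or.inl fun x hx => (hadjC v hx).1 (hall x hx)
    · exact Or.inr fun x hx h => hnone x hx ((hadjC v hx).2 h)
  have hMmaxG : ∀ Y, M ⊆ Y → IsCliqueModule G Y → Y = M := by
    rintro Y hMY ⟨hYcl, hYmod⟩
    have hYCT : Y ⊆ C ∪ T := by
      intro y hy
      by_cases hyM : y ∈ M
      · exact Or.inl (hMC hyM)
      · exact adj_to_C_mem hNC (hMC hm)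
          (hYcl hy (hMY hm) (fun e => hyM (e ▸ hm)))
    have hnCT : ∀ x, x ∈ D → x ∈ C ∪ T → False := by
      rintro x hxD (hc | ht)
      · exact hCD.ne_of_mem hc hxD rfl
      · exact hDT.ne_of_mem hxD ht rfl
    have hYT : ∀ y ∈ Y, y ∉ T := by
      intro t htY htT
      obtain ⟨htD, d, hd, hadj⟩ := (hND ▸ htT : t ∈ setNbhd G D)
      have hdY : d ∉ Y := fun h => hnCT d hd (hYCT h)
      rcases hYmod d hdY with hall | hnone
      · exact hnCT d hd (adj_to_C_mem hNC (hMC hm) (hall m (hMY hm)))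
      · exact hnone t htY hadj.symm
    have hYC : Y ⊆ C := fun y hy => (hYCT hy).resolve_right (hYT y hy)
    refine hM.2.2.1 Y hMY ⟨?_, ?_⟩
    · exact fun x hx y hy hxy => (satG_adj_C hCT hNC (hYC hy)).2 (hYcl hx hy hxy)
    · intro v hv
      rcases hYmod v hv with hall | hnone
      · exact Or.inl fun x hx => (satG_adj_C hCT hNC (hYC hx)).2 (hall x hx)
      · exact Or.inr fun x hx h => hnone x hx ((satG_adj_C hCT hNC (hYC hx)).1 h)
  refine ⟨⟨m, hm⟩, ⟨hMclG, hMmodG⟩, hMmaxG, ?_⟩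
  -- the neighbourhood condition
  have hSS' : setNbhd (satG G C T) M = setNbhd G M := setNbhd_satG_eq hCT hNC hMC
  by_cases hS'emp : setNbhd G M = ∅
  · exact Or.inl hS'emp
  right
  set S' := setNbhd G M with hS'def
  have hS'ne : S'.Nonempty := Set.nonempty_iff_ne_empty.2 hS'emp
  have hMS' : ∀ x ∈ M, x ∉ S' := fun x hx h => h.1 hx
  have hmin' : IsMinimalSeparator (satG G C T) S' := by
    rcases hM.2.2.2 with hemp | hmin
    · exact absurd (hSS' ▸ hemp) hS'emp
    · exact hSS' ▸ hmin
  obtain ⟨u', v', hne, hms⟩ := hmin'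
  have hS'CT : S' ⊆ C ∪ T := by
    rintro x ⟨hxM, y, hy, hadj⟩
    exact adj_to_C_mem hNC (hMC hy) hadj
  -- u', v' lie in C ∪ T
  have hmemCT : ∀ z z' : V, z ≠ z' → IsMinSeparator (satG G C T) z z' S' → z ∈ C ∪ T := by
    intro z z' hzz' hmszz
    by_contra hz
    refine hmszz.2 ∅ (Set.empty_ssubset.2 hS'ne)
      ⟨fun h => hz (satG_adj_mem_left h), by simp, by simp, ?_⟩
    rintro ⟨p, -⟩
    cases p with
    | nil => exact hzz' rfl
    | cons h q => exact hz (satG_adj_mem_left h)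
  have hu'CT : u' ∈ C ∪ T := hmemCT u' v' hne hms
  have hv'CT : v' ∈ C ∪ T := hmemCT v' u' hne.symm (minSep_symm hms)
  -- the component of M
  have hMcomp : ∀ x ∈ M, Rcomp (satG G C T) S' x = M := by
    intro x hx
    refine Set.Subset.antisymm (fun y hy => reach_confined (le_of_eq hSS') hx hy)
      (fun y hy => ?_)
    rcases eq_or_ne y x with rfl | hyx
    · exact reach_refl (hMS' y hy)
    · exact reach_adj (reach_refl (hMS' x hx)) (hM.2.1.1 hx hy hyx.symm) (hMS' y hy)
  -- key step given a suitable "other side" K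
  have hKey : ∀ K : Set V, K.Nonempty → Disjoint M K → ConnWithin (satG G C T) K →
      setNbhd (satG G C T) K = S' → K ⊆ C ∪ T → IsMinimalSeparator G S' := by
    intro K hKne hMK hcK hNK hKCT
    have hKS' : ∀ x ∈ K, x ∉ S' := fun x hx h => ((hNK ▸ h : _ ∈ setNbhd _ K)).1 hx
    by_cases hKT : ∀ t ∈ K, t ∉ T
    · -- K is inside C: direct conversion
      have hKC : K ⊆ C := fun x hx => (hKCT hx).resolve_right (hKT x hx)
      have hNKG : setNbhd G K = S' := by
        rw [← setNbhd_satG_eq hCT hNC hKC]; exact hNK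
      have hcKG : ConnWithin G K := by
        intro x hx y hy
        obtain ⟨p, hp⟩ := hcK x hx y hy
        exact satG_walk_toG hCT hNC hKC p hp
      obtain ⟨k, hk⟩ := hKne
      obtain ⟨hne2, hmsG⟩ := sep_criterion hMK (conn_of_clique hMclG) hcKG
        hS'def.symm hNKG hm hk
      exact ⟨m, k, hne2, hmsG⟩
    · -- K meets T: go through D
      push_neg at hKT
      obtain ⟨t₀, ht₀K, ht₀T⟩ := hKT
      obtain ⟨d₀, hd₀⟩ := hD
      have hDS' : ∀ x ∈ D, x ∉ S' := by
        intro x hxD hxS'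
        rcases hS'CT hxS' with hc | ht
        · exact hCD.ne_of_mem hc hxD rfl
        · exact hDT.ne_of_mem hxD ht rfl
      set B := Rcomp G S' d₀ with hBdef
      have hDB : D ⊆ B := by
        intro d hd
        obtain ⟨p, hp⟩ := hcD d₀ hd₀ d hd
        exact ⟨p, fun x hx => hDS' x (hp x hx)⟩
      have hTB : ∀ t ∈ T, t ∉ S' → t ∈ B := by
        intro t htT htS'
        obtain ⟨-, d, hd, hadj⟩ := (hND ▸ htT : t ∈ setNbhd G D)
        exact reach_adj (hDB hd) hadj.symm htS'
      have hKB : K ⊆ B := by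
        intro x hx
        obtain ⟨p, hp⟩ := hcK x hx t₀ ht₀K
        have r : ReachOutside G S' x t₀ :=
          satG_walk_reachG hND hcD hDS' p (fun z hz => hKS' z (hp z hz))
        exact reach_trans (hTB t₀ ht₀T (hKS' t₀ ht₀K)) (reach_symm r)
      have hNB : setNbhd G B = S' := by
        refine Set.Subset.antisymm setNbhd_Rcomp_subset (fun x hx => ?_)
        refine ⟨fun hxB => reach_end_not_mem hxB hx, ?_⟩
        obtain ⟨hxK, k, hk, hadj'⟩ := (hNK ▸ hx : x ∈ setNbhd _ K)
        rcases hadj' with ⟨-, -, hG⟩ | ⟨hxT, -, -⟩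
        · exact ⟨k, hKB hk, hG⟩
        · obtain ⟨-, d, hd, hadj⟩ := (hND ▸ hxT : x ∈ setNbhd G D)
          exact ⟨d, hDB hd, hadj⟩
      have hMB : Disjoint M B := by
        rw [Set.disjoint_left]
        intro x hxM hxB
        have : d₀ ∈ M := reach_confined (le_of_eq hS'def.symm) hxM (reach_symm hxB)
        exact hCD.ne_of_mem (hMC this) hd₀ rfl
      obtain ⟨hne2, hmsG⟩ := sep_criterion hMB (conn_of_clique hMclG)
        Rcomp_connWithin hS'def.symm hNB hm (hDB hd₀)
      exact ⟨m, d₀, hne2, hmsG⟩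
  -- choose K among the two components of the minimal separator S' in satG
  by_cases hu'M : u' ∈ M
  · refine hKey (Rcomp (satG G C T) S' v') ⟨v', mem_Rcomp_self hms.1.2.2.1⟩ ?_
      Rcomp_connWithin (Rcomp_eq_of_minSep (minSep_symm hms))
      (fun x hx => satG_reach_CT hv'CT hx)
    rw [← hMcomp u' hu'M]
    exact Rcomp_disjoint_of_sep hms.1.2.2.2
  · refine hKey (Rcomp (satG G C T) S' u') ⟨u', mem_Rcomp_self hms.1.2.1⟩ ?_
      Rcomp_connWithin (Rcomp_eq_of_minSep hms)
      (fun x hx => satG_reach_CT hu'CT hx)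
    rw [Set.disjoint_left]
    intro x hxM hxK
    exact hu'M (reach_confined (le_of_eq hSS') hxM (reach_symm hxK))

end Transfer


section Big

variable {G : SimpleGraph V}

/-- Berry–Bordat: each full component of a minimal separator contains a moplex. -/
lemma moplex_in_comp [Finite V] :
    ∀ n : ℕ, ∀ (G : SimpleGraph V) (C D T : Set V), C.ncard ≤ n →
    C.Nonempty → D.Nonempty → Disjoint C D → Disjoint C T → Disjoint D T →
    ConnWithin G C → ConnWithin G D →
    setNbhd G C = T → setNbhd G D = T →
    ∃ X, IsMoplex G X ∧ X ⊆ C := by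
  intro n
  induction n using Nat.strong_induction_on with
  | _ n ih =>
  intro G C D T hcard hC hD hCD hCT hDT hcC hcD hNC hND
  classical
  have hnoCD : ∀ c ∈ C, ∀ d ∈ D, ¬ G.Adj c d := by
    intro c hc d hd hadj
    by_cases hcD' : c ∈ D
    · exact hCD.ne_of_mem hc hcD' rfl
    · exact hCT.ne_of_mem hc (hND ▸ (⟨hcD', d, hd, hadj⟩ : c ∈ setNbhd G D)) rfl
  by_cases hcase : G.IsClique C ∧ ∀ c ∈ C, ∀ t ∈ T, G.Adj c t
  · -- Case 1: C itself is a moplex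
    obtain ⟨hCcl, hCTadj⟩ := hcase
    obtain ⟨c0, hc0⟩ := hC
    obtain ⟨d0, hd0⟩ := hD
    refine ⟨C, ⟨⟨c0, hc0⟩, ⟨hCcl, ?_⟩, ?_, ?_⟩, Set.Subset.refl C⟩
    · intro v hv
      by_cases hvT : v ∈ T
      · exact Or.inl fun x hx => (hCTadj x hx v hvT).symm
      · exact Or.inr fun x hx hadj =>
          hvT (hNC ▸ (⟨hv, x, hx, hadj⟩ : v ∈ setNbhd G C))
    · rintro Y hCY ⟨hYcl, hYmod⟩
      refine Set.Subset.antisymm ?_ hCY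
      intro y hyY
      by_contra hyC
      have hyT : y ∈ T :=
        hNC ▸ (⟨hyC, c0, hc0, hYcl hyY (hCY hc0) (fun e => hyC (e ▸ hc0))⟩ :
          y ∈ setNbhd G C)
      obtain ⟨-, d, hd, hadj⟩ := (hND ▸ hyT : y ∈ setNbhd G D)
      have hdY : d ∉ Y := by
        intro hdY'
        exact hnoCD c0 hc0 d hd
          (hYcl hdY' (hCY hc0) (hCD.ne_of_mem hc0 hd).symm).symm
      rcases hYmod d hdY with hall | hnone
      · exact hnoCD c0 hc0 d hd (hall c0 (hCY hc0)).symm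
      · exact hnone y hyY hadj.symm
    · rw [hNC]
      obtain ⟨hne, hmin⟩ := sep_criterion hCD hcC hcD hNC hND hc0 hd0
      exact Or.inr ⟨c0, d0, hne, hmin⟩
  · -- Case 2: recurse into the saturated restricted graph
    set G' := satG G C T with hG'def
    have hex : ∃ p q, p ∈ C ∧ q ∈ C ∪ T ∧ p ≠ q ∧ ¬ G'.Adj p q := by
      by_cases hcl : G.IsClique C
      · obtain ⟨c, hc, t, ht, hnadj⟩ := by
          have := hcase; push_neg at this
          exact this hcl
        refine ⟨c, t, hc, Or.inr ht, hCT.ne_of_mem hc ht, ?_⟩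
        rintro (⟨-, -, hGa⟩ | ⟨h1, -, -⟩)
        · exact hnadj hGa
        · exact hCT.ne_of_mem hc h1 rfl
      · rw [isClique_iff, Set.Pairwise] at hcl
        push_neg at hcl
        obtain ⟨x, hx, y, hy, hxy, hnadj⟩ := hcl
        refine ⟨x, y, hx, Or.inl hy, hxy, ?_⟩
        rintro (⟨-, -, hGa⟩ | ⟨h1, -, -⟩)
        · exact hnadj hGa
        · exact hCT.ne_of_mem hx h1 rfl
    obtain ⟨p, q, hpC, hqCT, hpq, hnadj'⟩ := hex
    obtain ⟨T₂, hT₂⟩ := exists_minSeparator (G := G') hpq hnadj'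
    have hpC₂ : p ∈ Rcomp G' T₂ p := mem_Rcomp_self hT₂.1.2.1
    have hqD₂ : q ∈ Rcomp G' T₂ q := mem_Rcomp_self hT₂.1.2.2.1
    have hC₂D₂ : Disjoint (Rcomp G' T₂ p) (Rcomp G' T₂ q) :=
      Rcomp_disjoint_of_sep hT₂.1.2.2.2
    have hNC₂ : setNbhd G' (Rcomp G' T₂ p) = T₂ := Rcomp_eq_of_minSep hT₂
    have hND₂ : setNbhd G' (Rcomp G' T₂ q) = T₂ := Rcomp_eq_of_minSep (minSep_symm hT₂)
    have hC₂CT : Rcomp G' T₂ p ⊆ C ∪ T := fun x hx => satG_reach_CT (Or.inl hpC) hx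
    have hD₂CT : Rcomp G' T₂ q ⊆ C ∪ T := fun x hx => satG_reach_CT hqCT hx
    have hTside : Disjoint (Rcomp G' T₂ p) T ∨ Disjoint (Rcomp G' T₂ q) T := by
      by_contra hcon
      push_neg at hcon
      obtain ⟨t1, ht1C₂, ht1T⟩ := Set.not_disjoint_iff.1 hcon.1
      obtain ⟨t2, ht2D₂, ht2T⟩ := Set.not_disjoint_iff.1 hcon.2
      have hne12 : t1 ≠ t2 := hC₂D₂.ne_of_mem ht1C₂ ht2D₂
      have hadj12 : G'.Adj t1 t2 := Or.inr ⟨ht1T, ht2T, hne12⟩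
      have ht2C₂ : t2 ∈ Rcomp G' T₂ p :=
        Rcomp_closed ht1C₂ hadj12 (reach_end_not_mem ht2D₂)
      exact hC₂D₂.ne_of_mem ht2C₂ ht2D₂ rfl
    have branch : ∀ C₃ D₃ : Set V, C₃.Nonempty → D₃.Nonempty → Disjoint C₃ D₃ →
        ConnWithin G' C₃ → ConnWithin G' D₃ →
        setNbhd G' C₃ = T₂ → setNbhd G' D₃ = T₂ →
        Disjoint C₃ T → C₃ ⊆ C ∪ T → D₃ ⊆ C ∪ T →
        ∃ X, IsMoplex G X ∧ X ⊆ C := by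
      intro C₃ D₃ hC₃ hD₃ hC₃D₃ hcC₃ hcD₃ hNC₃ hND₃ hC₃T hC₃CT hD₃CT
      have hC₃C : C₃ ⊆ C :=
        fun x hx => (hC₃CT hx).resolve_right (fun ht => hC₃T.ne_of_mem hx ht rfl)
      have hC₃T₂ : Disjoint C₃ T₂ :=
        Set.disjoint_left.2 fun x hx hx' => (hNC₃ ▸ hx' : x ∈ setNbhd G' C₃).1 hx
      have hD₃T₂ : Disjoint D₃ T₂ :=
        Set.disjoint_left.2 fun x hx hx' => (hND₃ ▸ hx' : x ∈ setNbhd G' D₃).1 hx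
      have hC₃ne : C₃ ≠ C := by
        intro hEq
        have hTT₂ : T ⊆ T₂ := by
          intro t ht
          obtain ⟨htC, c, hc, hadj⟩ := (hNC ▸ ht : t ∈ setNbhd G C)
          have hadj' : G'.Adj t c := Or.inl ⟨Or.inr ht, Or.inl hc, hadj⟩
          have hmem : t ∈ setNbhd G' C := ⟨htC, c, hc, hadj'⟩
          rw [← hEq] at hmem
          exact hNC₃ ▸ hmem
        obtain ⟨d3, hd3⟩ := hD₃
        rcases hD₃CT hd3 with hc | ht
        · rw [← hEq] at hc
          exact hC₃D₃.ne_of_mem hc hd3 rfl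
        · exact hD₃T₂.ne_of_mem hd3 (hTT₂ ht) rfl
      have hlt : C₃.ncard < n :=
        lt_of_lt_of_le
          (Set.ncard_lt_ncard (ssubset_of_subset_of_ne hC₃C hC₃ne) (Set.toFinite C)) hcard
      obtain ⟨M, hM, hMC₃⟩ := ih C₃.ncard hlt G' C₃ D₃ T₂ le_rfl hC₃ hD₃ hC₃D₃
        hC₃T₂ hD₃T₂ hcC₃ hcD₃ hNC₃ hND₃
      exact ⟨M, moplex_transfer hCD hCT hDT hD hcD hNC hND hM (hMC₃.trans hC₃C),
        hMC₃.trans hC₃C⟩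
    rcases hTside with hside | hside
    · exact branch _ _ ⟨p, hpC₂⟩ ⟨q, hqD₂⟩ hC₂D₂ Rcomp_connWithin Rcomp_connWithin
        hNC₂ hND₂ hside hC₂CT hD₂CT
    · exact branch _ _ ⟨q, hqD₂⟩ ⟨p, hpC₂⟩ hC₂D₂.symm Rcomp_connWithin Rcomp_connWithin
        hND₂ hNC₂ hside hD₂CT hC₂CT

end Big


/-- In a non-complete graph with exactly two moplexes `U` and `W`, the moplexes are
disjoint and both are simplicial (their neighbourhoods are cliques). -/
theorem twoMoplexes_disjoint_simplicial {V : Type*} [Fintype V] (G : SimpleGraph V)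
    (U W : Set V) (hnc : NonComplete G) (h : HasExactlyTwoMoplexes G U W) :
    Disjoint U W ∧ G.IsClique (setNbhd G U) ∧ G.IsClique (setNbhd G W) := by
  classical
  obtain ⟨hU, hW, hUW, hexact⟩ := h
  have key : ∀ X, IsMoplex G X → G.IsClique (setNbhd G X) := by
    intro X hX
    by_contra hnc
    rw [isClique_iff, Set.Pairwise] at hnc
    push_neg at hnc
    obtain ⟨x, hx, y, hy, hxy, hnadj⟩ := hnc
    obtain ⟨T, hT⟩ := exists_minSeparator hxy hnadj
    have hxT : x ∉ T := hT.1.2.1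
    have hyT : y ∉ T := hT.1.2.2.1
    have hdisj : Disjoint (Rcomp G T x) (Rcomp G T y) :=
      Rcomp_disjoint_of_sep hT.1.2.2.2
    have hNx : setNbhd G (Rcomp G T x) = T := Rcomp_eq_of_minSep hT
    have hNy : setNbhd G (Rcomp G T y) = T := Rcomp_eq_of_minSep (minSep_symm hT)
    obtain ⟨X₁, hX₁, hX₁C⟩ := moplex_in_comp (Rcomp G T x).ncard G
      (Rcomp G T x) (Rcomp G T y) T le_rfl ⟨x, mem_Rcomp_self hxT⟩
      ⟨y, mem_Rcomp_self hyT⟩ hdisj Rcomp_disjoint_sep Rcomp_disjoint_sep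
      Rcomp_connWithin Rcomp_connWithin hNx hNy
    obtain ⟨X₂, hX₂, hX₂C⟩ := moplex_in_comp (Rcomp G T y).ncard G
      (Rcomp G T y) (Rcomp G T x) T le_rfl ⟨y, mem_Rcomp_self hyT⟩
      ⟨x, mem_Rcomp_self hxT⟩ hdisj.symm Rcomp_disjoint_sep Rcomp_disjoint_sep
      Rcomp_connWithin Rcomp_connWithin hNy hNx
    have hX₁₂ : X₁ ≠ X₂ := by
      intro hEq
      obtain ⟨z, hz⟩ := hX₁.1
      exact hdisj.ne_of_mem (hX₁C hz) (hX₂C (hEq ▸ hz)) rfl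
    have hXchoice : X = X₁ ∨ X = X₂ := by
      rcases hexact X hX with hXu | hXw
      · rcases hexact X₁ hX₁ with h1 | h1
        · exact Or.inl (hXu.trans h1.symm)
        · rcases hexact X₂ hX₂ with h2 | h2
          · exact Or.inr (hXu.trans h2.symm)
          · exact absurd (h1.trans h2.symm) hX₁₂
      · rcases hexact X₁ hX₁ with h1 | h1
        · rcases hexact X₂ hX₂ with h2 | h2
          · exact absurd (h1.trans h2.symm) hX₁₂
          · exact Or.inr (hXw.trans h2.symm)
        · exact Or.inl (hXw.trans h1.symm)
    rcases hXchoice with hEq | hEq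
    · subst hEq
      obtain ⟨-, u, huX, hadj⟩ := hy
      have : y ∈ Rcomp G T x := Rcomp_closed (hX₁C huX) hadj.symm hyT
      exact hdisj.ne_of_mem this (mem_Rcomp_self hyT) rfl
    · subst hEq
      obtain ⟨-, u, huX, hadj⟩ := hx
      have : x ∈ Rcomp G T y := Rcomp_closed (hX₂C huX) hadj.symm hxT
      exact hdisj.ne_of_mem (mem_Rcomp_self hxT) this rfl
  exact ⟨moplex_disjoint hU hW hUW, key U hU, key W hW⟩
end MoplexPaper
end
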